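/- arXiv:2402.07798 — 4 statements merged into one kernel-verified Lean document; each statement's English description precedes it below -/
import Mathlib

section
/- Let n ≥ 2, N = n(n−1), and let u = [u_1, …, u_N] be a subword of λ̂_n with u_1 u_2 ⋯ u_N = e. Define the rotation u′ = rot(u) to be the subword of λ̂_n whose skip pattern is shifted cyclically by one: index i ∈ {1, …, N} is a skip of u′ if and only if index i−1 (taken cyclically, so index N when i = 1) is a skip of u. Then u′_1 u′_2 ⋯ u′_N = e. -/
/-- The affine reflection `((i,j))` of the affine symmetric group `W̃ₙ`, as a function
`ℤ → ℤ`: it interchanges `i + k*n` and `j + k*n` for every `k ∈ ℤ` and fixes all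
integers not congruent to `i` or `j` mod `n`. -/
def affRefl (n : ℕ) (i j : ℤ) : ℤ → ℤ := fun k =>
  if (k - i) % (n : ℤ) = 0 then k - i + j
  else if (k - j) % (n : ℤ) = 0 then k - j + i
  else k

/-- `t : ℤ → ℤ` is an affine reflection of `W̃ₙ`. -/
def IsAffRefl (n : ℕ) (t : ℤ → ℤ) : Prop :=
  ∃ i j : ℤ, (i - j) % (n : ℤ) ≠ 0 ∧ t = affRefl n i j

/-- The simple reflection `sⱼ = ((j, j+1))`. -/
def simpleRefl (n : ℕ) (j : ℤ) : ℤ → ℤ := affRefl n j (j + 1)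

/-- The translation `λₙ`: it sends `k ≡ 0 (mod n)` to `k - n(n-1)` and all other `k`
to `k + n`. -/
def lam (n : ℕ) : ℤ → ℤ := fun k =>
  if k % (n : ℤ) = 0 then k - (n : ℤ) * ((n : ℤ) - 1) else k + (n : ℤ)

/-- The product `r₁ r₂ ⋯ rₘ` of a list of elements, with `(w·v)(k) = w(v(k))`. -/
def listProd (l : List (ℤ → ℤ)) : ℤ → ℤ := l.foldr (· ∘ ·) id

/-- `l` is a factorization of `λₙ` into affine reflections. -/
def IsFactorization (n : ℕ) (l : List (ℤ → ℤ)) : Prop :=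
  (∀ t ∈ l, IsAffRefl n t) ∧ listProd l = lam n

/-- A tree-like factorization of `λₙ`: a factorization `[r₁, …, r_{2n-2}]` into `2n-2`
affine reflections such that there are integers `a₀, …, a_{2n-2}` and `b₁, …, b_{2n-2}`
with `r_k = ((a_{k-1}, b_k))`, `a_{k-1} < b_k` and `a_k ≡ b_k (mod n)`
(0-based: `r` at index `k` equals `((a k, b (k+1)))`). -/
def IsTreeLike (n : ℕ) (l : List (ℤ → ℤ)) : Prop :=
  IsFactorization n l ∧ l.length = 2 * n - 2 ∧
  ∃ a b : ℕ → ℤ, ∀ k : ℕ, ∀ h : k < l.length,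
    l.get ⟨k, h⟩ = affRefl n (a k) (b (k + 1)) ∧
    a k < b (k + 1) ∧ (a (k + 1) - b (k + 1)) % (n : ℤ) = 0

/-- `a₀ < a₁ < ⋯` is a strictly increasing endpoint sequence of the factorization `l`:
`r_ℓ = ((a_{ℓ-1}, a_ℓ))` (0-based: `r` at index `k` is `((a k, a (k+1)))`). -/
def EndSeq (n : ℕ) (l : List (ℤ → ℤ)) (a : ℕ → ℤ) : Prop :=
  ∀ k : ℕ, ∀ h : k < l.length,
    a k < a (k + 1) ∧ l.get ⟨k, h⟩ = affRefl n (a k) (a (k + 1))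

/-- The representative of `x` modulo `n` lying in `{1, …, n}`. -/
def resOne (n : ℕ) (x : ℤ) : ℤ := if x % (n : ℤ) = 0 then (n : ℤ) else x % (n : ℤ)

/-- `nb_k(r)` for the endpoint sequence `a` of a tree-like factorization of `λₙ`:
the list of the residues `a_i mod n` (representatives in `{1, …, n}`), in increasing
order of the index `i ∈ {1, …, 2n-2}`, over those `i` with `a_{i-1} ≡ k (mod n)`
(0-based: indices `i < 2n-2` with `a i ≡ k`, recording the residue of `a (i+1)`). -/
def nb (n : ℕ) (a : ℕ → ℤ) (k : ℤ) : List ℤ :=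
  ((List.range (2 * n - 2)).filter (fun i => decide ((a i - k) % (n : ℤ) = 0))).map
    (fun i => resOne n (a (i + 1)))

/-- A cyclic factorization of `λₙ`: a tree-like factorization such that, for an
endpoint sequence `a` as above, (i) `nb_n` is strictly increasing; and (ii) for each
`k ∈ {1, …, n-1}`, writing `nb_k = [c₁, …, c_ℓ]`, there is `j ∈ {1, …, ℓ}` with
`c_j < c_{j+1} < ⋯ < c_{ℓ-1} < k < c₁ < ⋯ < c_{j-1}`. -/
def IsCyclicFact (n : ℕ) (l : List (ℤ → ℤ)) : Prop :=
  IsTreeLike n l ∧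
  ∃ a : ℕ → ℤ, EndSeq n l a ∧
    List.Chain' (· < ·) (nb n a (n : ℤ)) ∧
    (∀ k : ℤ, 1 ≤ k → k ≤ (n : ℤ) - 1 →
      ∃ m : ℕ, m < (nb n a k).length ∧
        List.Chain' (· < ·)
          ((nb n a k).dropLast.drop m ++ k :: (nb n a k).dropLast.take m))

/-- The letter at (0-based) position `j` of the subword of `λ̂ₙ` with skip set `S`:
the identity `e` if `j` is a skip, and the simple reflection `sⱼ` otherwise. -/
def letterAt (n : ℕ) (S : Finset ℕ) (j : ℕ) : ℤ → ℤ :=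
  if j ∈ S then id else simpleRefl n (j : ℤ)

/-- The subword of the word `λ̂ₙ = [s₀, s₁, …, s_{n-1}]^{n-1}` (of length `N = n(n-1)`,
whose letter at 0-based position `j` is `s_j`) with skip set `S`. -/
def subword (n : ℕ) (S : Finset ℕ) : List (ℤ → ℤ) :=
  (List.range (n * (n - 1))).map (letterAt n S)

/-- `u_{(j)}`: the product of the first `j` letters of the subword. -/
def uPref (n : ℕ) (S : Finset ℕ) (j : ℕ) : ℤ → ℤ :=
  listProd ((subword n S).take j)

/-- `u_{(j)}⁻¹`: since every letter is an involution, the inverse of `u_{(j)}` is the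
product of the first `j` letters in reverse order. -/
def uPrefInv (n : ℕ) (S : Finset ℕ) (j : ℕ) : ℤ → ℤ :=
  listProd (((subword n S).take j).reverse)

/-- The element `t_{j+1} = u_{(j)} s_j u_{(j)}⁻¹` of `inv(u)` (0-based `j`). -/
def conjAt (n : ℕ) (S : Finset ℕ) (j : ℕ) : ℤ → ℤ :=
  uPref n S j ∘ simpleRefl n (j : ℤ) ∘ uPrefInv n S j

/-- The (0-based) skip indices of the subword, in increasing order. -/
def skipIdx (S : Finset ℕ) : List ℕ := S.sort (· ≤ ·)

/-- The sequence `r^u` of skip reflections of the subword with skip set `S`. -/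
def skipRefls (n : ℕ) (S : Finset ℕ) : List (ℤ → ℤ) :=
  (skipIdx S).map (conjAt n S)

/-- The subword with skip set `S` is a member of `S_n`: it is a subword of `λ̂ₙ`
with exactly `2n-2` skips whose product is the identity. -/
def SnMem (n : ℕ) (S : Finset ℕ) : Prop :=
  S ⊆ Finset.range (n * (n - 1)) ∧ S.card = 2 * n - 2 ∧ listProd (subword n S) = id

/-- The product of the suffix `r_{i+1} ⋯ r_m` (0-based: drops the first `i` factors). -/
def suffixProd (l : List (ℤ → ℤ)) (i : ℕ) : ℤ → ℤ := listProd (l.drop i)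

/-- The cyclic segment product `u_{a+1} u_{a+2} ⋯ u_{a+L}` of the subword with skip set
`S` (0-based starting position `a`, indices taken modulo `N = n(n-1)`). -/
def segProd (n : ℕ) (S : Finset ℕ) (a L : ℕ) : ℤ → ℤ :=
  listProd ((List.range L).map (fun t => letterAt n S ((a + t) % (n * (n - 1)))))

/-- The shift `k ↦ k + 1`. -/
def shf : ℤ → ℤ := fun k => k + 1

/-- The shift `k ↦ k - 1`. -/
def unshf : ℤ → ℤ := fun k => k - 1

lemma affRefl_shift (n : ℕ) (i j : ℤ) :
    shf ∘ affRefl n i j ∘ unshf = affRefl n (i + 1) (j + 1) := by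
  funext k
  simp only [Function.comp, affRefl, shf, unshf]
  have h1 : k - 1 - i = k - (i + 1) := by ring
  have h2 : k - 1 - j = k - (j + 1) := by ring
  simp only [h1, h2]
  split_ifs <;> ring

lemma affRefl_period (n : ℕ) (i j m : ℤ) :
    affRefl n (i + (n : ℤ) * m) (j + (n : ℤ) * m) = affRefl n i j := by
  funext k
  simp only [affRefl]
  have h1 : k - (i + (n : ℤ) * m) = k - i + (n : ℤ) * (-m) := by ring
  have h2 : k - (j + (n : ℤ) * m) = k - j + (n : ℤ) * (-m) := by ring
  rw [h1, h2, mul_comm (n : ℤ) (-m), Int.add_mul_emod_self_right,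
    Int.add_mul_emod_self_right]
  split_ifs <;> ring

lemma emod_add_left (nz : ℤ) {a : ℤ} (b : ℤ) (h : a % nz = 0) :
    (a + b) % nz = b % nz := by
  obtain ⟨c, rfl⟩ := Int.dvd_of_emod_eq_zero h
  rw [mul_comm nz c, add_comm, Int.add_mul_emod_self_right]

lemma affRefl_invol (n : ℕ) {i j : ℤ} (h : (i - j) % (n : ℤ) ≠ 0) :
    affRefl n i j ∘ affRefl n i j = id := by
  have hji : (j - i) % (n : ℤ) ≠ 0 := by
    intro hc
    apply h
    have : i - j = -(j - i) := by ring
    rw [this]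
    exact Int.emod_eq_zero_of_dvd ((dvd_neg).mpr (Int.dvd_of_emod_eq_zero hc))
  have hij : (i - j) % (n : ℤ) ≠ 0 := h
  funext k
  simp only [Function.comp, affRefl, id]
  by_cases h1 : (k - i) % (n : ℤ) = 0
  · simp only [if_pos h1]
    have e1 : (k - i + j - i) % (n : ℤ) ≠ 0 := by
      have : k - i + j - i = (k - i) + (j - i) := by ring
      rw [this, emod_add_left _ _ h1]; exact hji
    have e2 : (k - i + j - j) % (n : ℤ) = 0 := by
      have : k - i + j - j = k - i := by ring
      rw [this]; exact h1
    simp only [if_neg e1, if_pos e2]; ring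
  · simp only [if_neg h1]
    by_cases h2 : (k - j) % (n : ℤ) = 0
    · simp only [if_pos h2]
      have e1 : (k - j + i - i) % (n : ℤ) = 0 := by
        have : k - j + i - i = k - j := by ring
        rw [this]; exact h2
      simp only [if_pos e1]; ring
    · simp only [if_neg h2, if_neg h1]

lemma simpleRefl_invol (n : ℕ) (hn : 2 ≤ n) (j : ℤ) :
    simpleRefl n j ∘ simpleRefl n j = id := by
  apply affRefl_invol
  intro hc
  have : (n : ℤ) ∣ (j - (j + 1)) := Int.dvd_of_emod_eq_zero hc
  have h1 : (n : ℤ) ∣ 1 := by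
    rw [show j - (j + 1) = -1 from by ring] at this
    exact (dvd_neg).mp this
  have := Int.le_of_dvd one_pos h1
  omega

lemma listProd_conj (l : List (ℤ → ℤ)) :
    listProd (l.map (fun f => shf ∘ f ∘ unshf)) = shf ∘ listProd l ∘ unshf := by
  induction l with
  | nil => funext k; simp [listProd, shf, unshf]
  | cons f l ih =>
    simp only [List.map_cons, listProd, List.foldr_cons] at *
    rw [ih]
    funext k
    simp [Function.comp, shf, unshf]

lemma listProd_append' (l l' : List (ℤ → ℤ)) :
    listProd (l ++ l') = listProd l ∘ listProd l' := by
  induction l with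
  | nil => funext k; simp [listProd]
  | cons f l ih =>
    simp only [List.cons_append, listProd, List.foldr_cons] at *
    rw [ih]
    rfl

/-- The rotation of an `e`-subword of `λ̂ₙ` (the subword whose skip
pattern is cyclically shifted by one) is again an `e`-subword. -/
theorem stmt7 (n : ℕ) (hn : 2 ≤ n) (S : Finset ℕ)
    (hS : S ⊆ Finset.range (n * (n - 1)))
    (h : listProd (subword n S) = id) :
    listProd (subword n ((Finset.range (n * (n - 1))).filter
      (fun i => (i + (n * (n - 1) - 1)) % (n * (n - 1)) ∈ S))) = id := by
  have hN2 : 2 ≤ n * (n - 1) := by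
    have h1 : 1 ≤ n - 1 := by omega
    calc 2 = 2 * 1 := by norm_num
      _ ≤ n * (n - 1) := Nat.mul_le_mul hn h1
  obtain ⟨M, hM⟩ : ∃ M, n * (n - 1) = M + 1 := ⟨n * (n - 1) - 1, by omega⟩
  have hM1 : 1 ≤ M := by omega
  rw [hM]
  simp only [Nat.add_sub_cancel]
  set S' := (Finset.range (M + 1)).filter (fun i => (i + M) % (M + 1) ∈ S) with hS'def
  -- membership facts
  have hmem : ∀ i : ℕ, i < M → ((i + 1) ∈ S' ↔ i ∈ S) := by
    intro i hi
    rw [hS'def, Finset.mem_filter, Finset.mem_range]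
    have e1 : i + 1 + M = i + (M + 1) := by omega
    rw [e1, Nat.add_mod_right, Nat.mod_eq_of_lt (by omega)]
    constructor
    · rintro ⟨-, h2⟩; exact h2
    · intro h2; exact ⟨by omega, h2⟩
  have hmem0 : (0 ∈ S') ↔ M ∈ S := by
    rw [hS'def, Finset.mem_filter, Finset.mem_range]
    rw [Nat.zero_add, Nat.mod_eq_of_lt (by omega)]
    constructor
    · rintro ⟨-, h2⟩; exact h2
    · intro h2; exact ⟨by omega, h2⟩
  -- letter shift
  have hlet : ∀ i : ℕ, i < M →
      letterAt n S' (i + 1) = shf ∘ letterAt n S i ∘ unshf := by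
    intro i hi
    unfold letterAt
    by_cases hiS : i ∈ S
    · rw [if_pos ((hmem i hi).mpr hiS), if_pos hiS]
      funext k; simp [shf, unshf]
    · rw [if_neg (fun hc => hiS ((hmem i hi).mp hc)), if_neg hiS]
      unfold simpleRefl
      rw [affRefl_shift]
      push_cast
      ring_nf
  -- product of first M letters of original subword
  have hQ : listProd ((List.range M).map (letterAt n S)) = letterAt n S M := by
    have hsplit : subword n S =
        (List.range M).map (letterAt n S) ++ [letterAt n S M] := by
      unfold subword
      rw [hM, List.range_succ, List.map_append, List.map_cons, List.map_nil]
    rw [hsplit, listProd_append'] at h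
    have hinv : letterAt n S M ∘ letterAt n S M = id := by
      unfold letterAt
      split_ifs
      · funext k; rfl
      · exact simpleRefl_invol n hn _
    have hsingle : listProd [letterAt n S M] = letterAt n S M := by
      funext k; simp [listProd]
    rw [hsingle] at h
    calc listProd ((List.range M).map (letterAt n S))
        = (listProd ((List.range M).map (letterAt n S)) ∘ letterAt n S M) ∘
            letterAt n S M := by
          rw [Function.comp_assoc, hinv, Function.comp_id]
      _ = letterAt n S M := by rw [h, Function.id_comp]
  -- decompose rotated subword
  unfold subword
  rw [hM, List.range_succ_eq_map, List.map_cons, List.map_map]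
  have hmapeq : (List.range M).map (letterAt n S' ∘ Nat.succ)
      = ((List.range M).map (letterAt n S)).map (fun f => shf ∘ f ∘ unshf) := by
    rw [List.map_map]
    apply List.map_congr_left
    intro i hi
    rw [List.mem_range] at hi
    exact hlet i hi
  rw [hmapeq]
  have hcons : ∀ (f : ℤ → ℤ) (l : List (ℤ → ℤ)),
      listProd (f :: l) = f ∘ listProd l := fun _ _ => rfl
  rw [hcons, listProd_conj, hQ]
  by_cases hMS : M ∈ S
  · have h0 : (0 : ℕ) ∈ S' := hmem0.mpr hMS
    unfold letterAt
    rw [if_pos h0, if_pos hMS]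
    funext k; simp [shf, unshf]
  · have h0 : (0 : ℕ) ∉ S' := fun hc => hMS (hmem0.mp hc)
    unfold letterAt
    rw [if_neg h0, if_neg hMS]
    unfold simpleRefl
    rw [affRefl_shift]
    have hcast : ((M : ℤ) + 1) = 0 + (n : ℤ) * ((n : ℤ) - 1) := by
      have : ((M + 1 : ℕ) : ℤ) = (n : ℤ) * ((n : ℤ) - 1) := by
        rw [← hM, Nat.cast_mul, Nat.cast_sub (by omega : 1 ≤ n), Nat.cast_one]
      push_cast at this
      omega
    rw [hcast,
      show (0 : ℤ) + (n : ℤ) * ((n : ℤ) - 1) + 1 = 1 + (n : ℤ) * ((n : ℤ) - 1) from by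
        ring,
      affRefl_period]
    have e1 : affRefl n ((0 : ℕ) : ℤ) (((0 : ℕ) : ℤ) + 1) = affRefl n 0 1 := by norm_num
    have e2 : affRefl n 0 1 = simpleRefl n 0 := by unfold simpleRefl; norm_num
    rw [e1, e2]
    exact simpleRefl_invol n hn 0
end

section
/- Let n ≥ 2, N = n(n−1), and let u = [u_1, …, u_N] be a subword of λ̂_n with u_1 u_2 ⋯ u_N = e. Then for every integer k, every a ∈ {1, …, N}, and every length L with 1 ≤ L ≤ N, the cyclic segment product w = u_a u_{a+1} ⋯ u_{a+L−1} (indices taken modulo N with representatives in {1, …, N}) satisfies |w(k) − k| ≤ n − 2. -/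
namespace Stmt9Aux

lemma affRefl_succ_apply (n : ℕ) (i k : ℤ) :
    affRefl n i (i + 1) k =
      if (k - i) % (n:ℤ) = 0 then k + 1
      else if (k - i - 1) % (n:ℤ) = 0 then k - 1 else k := by
  unfold affRefl
  rw [show k - (i+1) = k - i - 1 by ring]
  split_ifs with h1 h2 <;> ring

lemma letterAt_apply (n : ℕ) (S : Finset ℕ) (p : ℕ) (v : ℤ) :
    letterAt n S p v =
      if p ∈ S then v else
      if (v - p) % (n:ℤ) = 0 then v + 1
      else if (v - p - 1) % (n:ℤ) = 0 then v - 1 else v := by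
  by_cases h : p ∈ S
  · simp [letterAt, h]
  · rw [letterAt, if_neg h, if_neg h, simpleRefl, affRefl_succ_apply]

lemma not_dvd_one (n : ℕ) (hn : 2 ≤ n) : ¬ ((n:ℤ) ∣ 1) := by
  intro hd
  have := Int.le_of_dvd one_pos hd
  omega

lemma letterAt_invol (n : ℕ) (hn : 2 ≤ n) (S : Finset ℕ) (p : ℕ) (v : ℤ) :
    letterAt n S p (letterAt n S p v) = v := by
  simp only [letterAt_apply n S p]
  by_cases h : p ∈ S
  · simp [h]
  · simp only [h, if_false]
    by_cases h1 : (v - (p:ℤ)) % (n:ℤ) = 0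
    · rw [if_pos h1]
      have hd1 : (n:ℤ) ∣ v - p := Int.dvd_of_emod_eq_zero h1
      have c1 : ¬ ((v + 1 - (p:ℤ)) % (n:ℤ) = 0) := by
        intro hc
        have hd2 := Int.dvd_of_emod_eq_zero hc
        have : (n:ℤ) ∣ 1 := by
          have := dvd_sub hd2 hd1
          simpa [show v + 1 - (p:ℤ) - (v - p) = 1 by ring] using this
        exact not_dvd_one n hn this
      rw [if_neg c1, if_pos (by rw [show v + 1 - (p:ℤ) - 1 = v - p by ring]; exact h1)]
      ring
    · rw [if_neg h1]
      by_cases h2 : (v - (p:ℤ) - 1) % (n:ℤ) = 0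
      · rw [if_pos h2, if_pos (by rw [show v - 1 - (p:ℤ) = v - p - 1 by ring]; exact h2)]
        ring
      · rw [if_neg h2, if_neg h1, if_neg h2]

lemma listProd_append (l1 l2 : List (ℤ → ℤ)) (k : ℤ) :
    listProd (l1 ++ l2) k = listProd l1 (listProd l2 k) := by
  induction l1 with
  | nil => rfl
  | cons g t ih =>
    show g (listProd (t ++ l2) k) = g (listProd t (listProd l2 k))
    rw [ih]

lemma invol_reverse (l : List (ℤ → ℤ)) (hl : ∀ g ∈ l, ∀ k, g (g k) = k) (x : ℤ) :
    listProd l.reverse (listProd l x) = x := by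
  induction l with
  | nil => rfl
  | cons g t ih =>
    rw [List.reverse_cons]
    show listProd (t.reverse ++ [g]) (g (listProd t x)) = x
    rw [listProd_append]
    show listProd t.reverse (g (g (listProd t x))) = x
    rw [hl g List.mem_cons_self, ih (fun g' hg' => hl g' (List.mem_cons_of_mem _ hg'))]

/-- the trajectory: `Fm x j` is the first `j` letters applied in word order. -/
def Fm (n : ℕ) (S : Finset ℕ) (x : ℤ) : ℕ → ℤ
  | 0 => x
  | (j+1) => letterAt n S (j % (n * (n - 1))) (Fm n S x j)

lemma Fm_succ (n : ℕ) (S : Finset ℕ) (x : ℤ) (j : ℕ) :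
    Fm n S x (j+1) = letterAt n S (j % (n * (n - 1))) (Fm n S x j) := rfl

lemma Fm_take (n : ℕ) (S : Finset ℕ) (x : ℤ) :
    ∀ j, j ≤ n * (n-1) →
      Fm n S x j = listProd ((List.range j).map (letterAt n S)).reverse x := by
  intro j
  induction j with
  | zero => intro _; rfl
  | succ j ih =>
    intro hj
    rw [Fm_succ, Nat.mod_eq_of_lt (by omega), List.range_succ, List.map_append,
      List.reverse_append]
    show letterAt n S j (Fm n S x j)
      = listProd ([letterAt n S j] ++ ((List.range j).map (letterAt n S)).reverse) x
    rw [listProd_append, ih (by omega)]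
    rfl

lemma Fm_N (n : ℕ) (hn : 2 ≤ n) (S : Finset ℕ) (h : listProd (subword n S) = id) (x : ℤ) :
    Fm n S x (n * (n-1)) = x := by
  have h1 : listProd (subword n S) x = x := by rw [h]; rfl
  have h2 := Fm_take n S x (n*(n-1)) le_rfl
  have h3 : (List.range (n*(n-1))).map (letterAt n S) = subword n S := rfl
  rw [h3] at h2
  rw [h2]
  conv_lhs => rw [← h1]
  exact invol_reverse (subword n S)
    (fun g hg => by
      obtain ⟨p, _, rfl⟩ := List.mem_map.mp hg
      exact letterAt_invol n hn S p) x

lemma Fm_period (n : ℕ) (hn : 2 ≤ n) (S : Finset ℕ) (h : listProd (subword n S) = id)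
    (x : ℤ) : ∀ j, Fm n S x (n * (n-1) + j) = Fm n S x j := by
  intro j
  induction j with
  | zero => exact Fm_N n hn S h x
  | succ j ih =>
    have : n * (n-1) + (j+1) = (n*(n-1) + j) + 1 := by omega
    rw [this, Fm_succ, Nat.add_mod_left, ih, Fm_succ]

lemma Fm_surj (n : ℕ) (hn : 2 ≤ n) (S : Finset ℕ) (m : ℕ) :
    ∀ k : ℤ, ∃ x : ℤ, Fm n S x m = k := by
  induction m with
  | zero => exact fun k => ⟨k, rfl⟩
  | succ m ih =>
    intro k
    obtain ⟨x, hx⟩ := ih (letterAt n S (m % (n*(n-1))) k)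
    exact ⟨x, by rw [Fm_succ, hx, letterAt_invol n hn S]⟩

lemma seg_eq (n : ℕ) (hn : 2 ≤ n) (S : Finset ℕ) (x : ℤ) (a : ℕ) :
    ∀ L, segProd n S a L (Fm n S x (a + L)) = Fm n S x a := by
  intro L
  induction L with
  | zero => rfl
  | succ L ih =>
    rw [segProd, List.range_succ, List.map_append, listProd_append]
    show listProd _ (letterAt n S ((a+L) % (n*(n-1))) (id (Fm n S x (a + (L+1))))) = _
    rw [show a + (L+1) = (a+L)+1 by omega, Fm_succ, id_eq, letterAt_invol n hn S]
    exact ih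

/-- the step lemma -/
lemma Fm_step (n : ℕ) (hn : 2 ≤ n) (S : Finset ℕ) (x : ℤ) (j : ℕ) :
    (Fm n S x (j+1) = Fm n S x j + 1 ∧ (Fm n S x j - j) % (n:ℤ) = 0) ∨
    (Fm n S x (j+1) = Fm n S x j - 1 ∧ (Fm n S x j - j - 1) % (n:ℤ) = 0) ∨
    Fm n S x (j+1) = Fm n S x j := by
  set N := n * (n-1) with hN
  set p := j % N with hp
  set v := Fm n S x j with hv
  have hdiff : (n:ℤ) ∣ (j:ℤ) - (p:ℤ) := by
    have h2 : ((N:ℕ):ℤ) * ((j / N : ℕ):ℤ) + ((j % N : ℕ):ℤ) = (j:ℤ) := by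
      exact_mod_cast Nat.div_add_mod j N
    have h3 : (n:ℤ) ∣ ((N:ℕ):ℤ) := ⟨((n-1 : ℕ):ℤ), by rw [hN, Nat.cast_mul]⟩
    have h4 : (j:ℤ) - (p:ℤ) = ((N:ℕ):ℤ) * ((j / N : ℕ):ℤ) := by rw [hp]; omega
    rw [h4]
    exact Dvd.dvd.mul_right h3 _
  rw [Fm_succ, letterAt_apply, ← hp, ← hv]
  by_cases hS : p ∈ S
  · rw [if_pos hS]; right; right; rfl
  · rw [if_neg hS]
    by_cases h1 : (v - (p:ℤ)) % (n:ℤ) = 0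
    · rw [if_pos h1]
      left
      refine ⟨rfl, Int.emod_eq_zero_of_dvd ?_⟩
      have := dvd_sub (Int.dvd_of_emod_eq_zero h1) hdiff
      simpa [show v - (p:ℤ) - ((j:ℤ) - p) = v - j by ring] using this
    · rw [if_neg h1]
      by_cases h2 : (v - (p:ℤ) - 1) % (n:ℤ) = 0
      · rw [if_pos h2]
        right; left
        refine ⟨rfl, Int.emod_eq_zero_of_dvd ?_⟩
        have := dvd_sub (Int.dvd_of_emod_eq_zero h2) hdiff
        simpa [show v - (p:ℤ) - 1 - ((j:ℤ) - p) = v - j - 1 by ring] using this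
      · rw [if_neg h2]; right; right; rfl

end Stmt9Aux



namespace Stmt9Traj

/-- abstract step property -/
def Step (n : ℕ) (f : ℕ → ℤ) : Prop :=
  ∀ j : ℕ, (f (j+1) = f j + 1 ∧ (f j - j) % (n:ℤ) = 0) ∨
    (f (j+1) = f j - 1 ∧ (f j - j - 1) % (n:ℤ) = 0) ∨ f (j+1) = f j

def ucnt (f : ℕ → ℤ) (j : ℕ) : ℕ :=
  ((Finset.range j).filter (fun t => f (t+1) = f t + 1)).card

def dcnt (f : ℕ → ℤ) (j : ℕ) : ℕ :=
  ((Finset.range j).filter (fun t => f (t+1) = f t - 1)).card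

lemma cnt_succ (P : ℕ → Prop) [DecidablePred P] (j : ℕ) :
    ((Finset.range (j+1)).filter P).card
      = ((Finset.range j).filter P).card + (if P j then 1 else 0) := by
  rw [Finset.range_add_one, Finset.filter_insert]
  split_ifs with h
  · rw [Finset.card_insert_of_notMem (by simp)]
  · rfl

lemma count (n : ℕ) (f : ℕ → ℤ) (hstep : Step n f) (j : ℕ) :
    f j + (dcnt f j : ℤ) = f 0 + (ucnt f j : ℤ) := by
  induction j with
  | zero => simp [ucnt, dcnt]
  | succ j ih =>
    have hu := cnt_succ (fun t => f (t+1) = f t + 1) j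
    have hd := cnt_succ (fun t => f (t+1) = f t - 1) j
    simp only [ucnt, dcnt] at ih ⊢
    rw [hu, hd]
    rcases hstep j with ⟨e, -⟩ | ⟨e, -⟩ | e <;>
      rw [e] <;> push_cast <;> split_ifs <;> omega

lemma phi_anti (n : ℕ) (f : ℕ → ℤ) (hstep : Step n f) :
    ∀ i j : ℕ, i ≤ j → f j - j ≤ f i - i := by
  intro i j hij
  induction j, hij using Nat.le_induction with
  | base => exact le_refl _
  | succ j hij ih =>
    rcases hstep j with ⟨e, -⟩ | ⟨e, -⟩ | e <;> push_cast <;> omega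

lemma ucnt_mono (f : ℕ → ℤ) {i j : ℕ} (hij : i ≤ j) : ucnt f i ≤ ucnt f j :=
  Finset.card_le_card (Finset.filter_subset_filter _ (Finset.range_subset_range.mpr hij))

lemma dcnt_mono (f : ℕ → ℤ) {i j : ℕ} (hij : i ≤ j) : dcnt f i ≤ dcnt f j :=
  Finset.card_le_card (Finset.filter_subset_filter _ (Finset.range_subset_range.mpr hij))

lemma dcnt_le (n : ℕ) (hn : 2 ≤ n) (f : ℕ → ℤ) (hstep : Step n f)
    (hclosed : f (n * (n-1)) = f 0) : dcnt f (n * (n-1)) ≤ n - 2 := by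
  classical
  set N := n * (n-1) with hN
  have hn0 : (0:ℤ) < (n:ℤ) := by exact_mod_cast (by omega : 0 < n)
  have hNcast : ((N:ℕ):ℤ) = (n:ℤ) * ((n:ℤ) - 1) := by
    rw [hN, Nat.cast_mul, Nat.cast_sub (by omega), Nat.cast_one]
  set D : Finset ℕ := (Finset.range N).filter (fun t => f (t+1) = f t - 1) with hD
  have hDcard : dcnt f N = D.card := rfl
  have hanti := phi_anti n f hstep
  set x := f 0 with hx
  -- facts about down-steps
  have hmem : ∀ t ∈ D, t < N ∧ f (t+1) = f t - 1 ∧ (n:ℤ) ∣ (f t - t - 1) ∧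
      x - N + 1 ≤ f t - t - 1 ∧ f t - t - 1 ≤ x - 1 := by
    intro t ht
    rw [hD, Finset.mem_filter, Finset.mem_range] at ht
    obtain ⟨htN, hdown⟩ := ht
    have hdvd : (n:ℤ) ∣ (f t - t - 1) := by
      rcases hstep t with ⟨e, -⟩ | ⟨-, c⟩ | e
      · exfalso; omega
      · exact Int.dvd_of_emod_eq_zero c
      · exfalso; omega
    have h1 := hanti 0 t (Nat.zero_le t)
    have h2 := hanti (t+1) N htN
    refine ⟨htN, hdown, hdvd, ?_, ?_⟩ <;> push_cast at h1 h2 ⊢ <;> omega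
  -- injectivity of the skipped-multiple map
  have hinj : ∀ t ∈ D, ∀ t' ∈ D,
      (f t - t - 1) / (n:ℤ) = (f t' - t' - 1) / (n:ℤ) → t = t' := by
    intro t ht t' ht' heq
    obtain ⟨htN, hdt, hdv, -, -⟩ := hmem t ht
    obtain ⟨htN', hdt', hdv', -, -⟩ := hmem t' ht'
    have e1 := Int.ediv_mul_cancel hdv
    have e2 := Int.ediv_mul_cancel hdv'
    rw [heq] at e1
    have hv : f t - t - 1 = f t' - t' - 1 := e1.symm.trans e2
    by_contra hne
    rcases Nat.lt_or_ge t t' with hlt | hge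
    · have := hanti (t+1) t' hlt
      push_cast at this; omega
    · have hlt' : t' < t := by omega
      have := hanti (t'+1) t hlt'
      push_cast at this; omega
  have key : ∀ (T : Finset ℤ), (∀ t ∈ D, (f t - t - 1) / (n:ℤ) ∈ T) → D.card ≤ T.card := by
    intro T hT
    exact Finset.card_le_card_of_injOn (fun t => (f t - t - 1) / (n:ℤ))
      (fun t ht => hT t ht)
      (fun t ht t' ht' heq => hinj t (by simpa using ht) t' (by simpa using ht') heq)
  by_cases hxn : x % (n:ℤ) = 0
  · -- x divisible: n-2 multiples strictly inside
    have hdx : (n:ℤ) ∣ x := Int.dvd_of_emod_eq_zero hxn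
    set s := x / (n:ℤ) with hs
    have hxs : (n:ℤ) * s = x := Int.mul_ediv_cancel' hdx
    have hcard := key (Finset.Icc (s - n + 2) (s - 1)) ?_
    · rw [Int.card_Icc] at hcard
      omega
    · intro t ht
      obtain ⟨-, -, hdv, hlo, hhi⟩ := hmem t ht
      have hq : (n:ℤ) * ((f t - t - 1) / (n:ℤ)) = f t - t - 1 := Int.mul_ediv_cancel' hdv
      set q := (f t - t - 1) / (n:ℤ) with hqdef
      rw [Finset.mem_Icc]
      constructor
      · by_contra hc
        push_neg at hc
        have h5 : (n:ℤ) * q ≤ (n:ℤ) * (s - n + 1) :=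
          mul_le_mul_of_nonneg_left (by omega) (le_of_lt hn0)
        rw [hq] at h5
        rw [hNcast] at hlo
        nlinarith
      · by_contra hc
        push_neg at hc
        have h5 : (n:ℤ) * s ≤ (n:ℤ) * q :=
          mul_le_mul_of_nonneg_left (by omega) (le_of_lt hn0)
        rw [hq] at h5
        nlinarith
  · -- x not divisible
    rcases Nat.eq_zero_or_pos D.card with hD0 | hD0
    · omega
    · -- there is also an up-step; its multiple is attained, not skipped
      have hcnt := count n f hstep N
      have hU : 0 < ucnt f N := by omega
      obtain ⟨t0, ht0⟩ := Finset.card_pos.mp hU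
      rw [Finset.mem_filter, Finset.mem_range] at ht0
      obtain ⟨ht0N, hup⟩ := ht0
      have hw : (n:ℤ) ∣ (f t0 - t0) := by
        rcases hstep t0 with ⟨-, c⟩ | ⟨e, -⟩ | e
        · exact Int.dvd_of_emod_eq_zero c
        · exfalso; omega
        · exfalso; omega
      have hwlo : x - N ≤ f t0 - t0 := by
        have := hanti t0 N (le_of_lt ht0N)
        push_cast at this; omega
      have hwhi : f t0 - t0 ≤ x := by
        have := hanti 0 t0 (Nat.zero_le t0)
        push_cast at this; omega
      set q0 := (f t0 - t0) / (n:ℤ) with hq0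
      have hq0e : (n:ℤ) * q0 = f t0 - t0 := Int.mul_ediv_cancel' hw
      set s := x / (n:ℤ) with hs
      set r := x % (n:ℤ) with hr
      have hsr : (n:ℤ) * s + r = x := Int.mul_ediv_add_emod x (n:ℤ)
      have hr0 : 0 ≤ r := Int.emod_nonneg x (ne_of_gt hn0)
      have hrn : r < (n:ℤ) := Int.emod_lt_of_pos x hn0
      have hrne : r ≠ 0 := hxn
      have hr1 : 1 ≤ r := by omega
      have hq0mem : q0 ∈ Finset.Icc (s - n + 2) s := by
        rw [Finset.mem_Icc]
        rw [hNcast] at hwlo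
        constructor
        · by_contra hc
          push_neg at hc
          have h5 : (n:ℤ) * q0 ≤ (n:ℤ) * (s - n + 1) :=
            mul_le_mul_of_nonneg_left (by omega) (le_of_lt hn0)
          rw [hq0e] at h5
          have e1 : (n:ℤ)*(s-n+1) = n*s - n*n + n := by ring
          have e2 : (n:ℤ)*((n:ℤ)-1) = n*n - n := by ring
          linarith
        · by_contra hc
          push_neg at hc
          have h5 : (n:ℤ) * (s + 1) ≤ (n:ℤ) * q0 :=
            mul_le_mul_of_nonneg_left (by omega) (le_of_lt hn0)
          rw [hq0e] at h5
          have e1 : (n:ℤ)*(s+1) = n*s + n := by ring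
          linarith
      have hcard := key ((Finset.Icc (s - n + 2) s).erase q0) ?_
      · rw [Finset.card_erase_of_mem hq0mem, Int.card_Icc] at hcard
        omega
      · intro t ht
        obtain ⟨htN, hdt, hdv, hlo, hhi⟩ := hmem t ht
        have hq : (n:ℤ) * ((f t - t - 1) / (n:ℤ)) = f t - t - 1 := Int.mul_ediv_cancel' hdv
        set q := (f t - t - 1) / (n:ℤ) with hqdef
        rw [Finset.mem_erase, Finset.mem_Icc]
        refine ⟨?_, ?_, ?_⟩
        · -- q ≠ q0 : skipped value is never attained
          intro hqq0
          rw [hqq0] at hq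
          rw [hq0e] at hq
          -- hq : f t0 - t0 = f t - t - 1
          rcases le_or_gt t0 t with hle | hlt
          · have := hanti t0 t hle
            omega
          · have := hanti (t+1) t0 hlt
            push_cast at this
            omega
        · by_contra hc
          push_neg at hc
          have h5 : (n:ℤ) * q ≤ (n:ℤ) * (s - n + 1) :=
            mul_le_mul_of_nonneg_left (by omega) (le_of_lt hn0)
          rw [hq] at h5
          rw [hNcast] at hlo
          have e1 : (n:ℤ)*(s-n+1) = n*s - n*n + n := by ring
          have e2 : (n:ℤ)*((n:ℤ)-1) = n*n - n := by ring
          linarith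
        · by_contra hc
          push_neg at hc
          have h5 : (n:ℤ) * (s + 1) ≤ (n:ℤ) * q :=
            mul_le_mul_of_nonneg_left (by omega) (le_of_lt hn0)
          rw [hq] at h5
          have e1 : (n:ℤ)*(s+1) = n*s + n := by ring
          linarith

lemma traj_bound (n : ℕ) (hn : 2 ≤ n) (f : ℕ → ℤ) (hstep : Step n f)
    (hclosed : f (n * (n-1)) = f 0) :
    ∀ i j : ℕ, i ≤ n * (n-1) → j ≤ n * (n-1) → |f i - f j| ≤ (n:ℤ) - 2 := by
  have aux : ∀ i j : ℕ, i ≤ j → j ≤ n * (n-1) → |f i - f j| ≤ (n:ℤ) - 2 := by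
    intro i j hij hj
    have h1 := count n f hstep i
    have h2 := count n f hstep j
    have h3 := count n f hstep (n * (n-1))
    have m1 : ucnt f i ≤ ucnt f j := ucnt_mono f hij
    have m2 : dcnt f i ≤ dcnt f j := dcnt_mono f hij
    have m3 : ucnt f j ≤ ucnt f (n * (n-1)) := ucnt_mono f hj
    have m4 : dcnt f j ≤ dcnt f (n * (n-1)) := dcnt_mono f hj
    have hd := dcnt_le n hn f hstep hclosed
    rw [abs_le]
    omega
  intro i j hi hj
  rcases Nat.le_total i j with hij | hij
  · exact aux i j hij hj
  · rw [abs_sub_comm]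
    exact aux j i hij hi

end Stmt9Traj

/-- For an `e`-subword `u` of `λ̂ₙ`, every cyclic segment product
`w = u_a ⋯ u_{a+L-1}` (0-based starting position `a < N`, length `1 ≤ L ≤ N`,
indices modulo `N = n(n-1)`) satisfies `|w(k) - k| ≤ n - 2` for every integer `k`. -/
theorem stmt9 (n : ℕ) (hn : 2 ≤ n) (S : Finset ℕ)
    (hS : S ⊆ Finset.range (n * (n - 1)))
    (h : listProd (subword n S) = id) :
    ∀ k : ℤ, ∀ a : ℕ, a < n * (n - 1) → ∀ L : ℕ, 1 ≤ L → L ≤ n * (n - 1) →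
      |segProd n S a L k - k| ≤ (n : ℤ) - 2 := by
  intro k a ha L hL1 hL2
  obtain ⟨x, hx⟩ := Stmt9Aux.Fm_surj n hn S (a + L) k
  have hstep : Stmt9Traj.Step n (Stmt9Aux.Fm n S x) := fun j => Stmt9Aux.Fm_step n hn S x j
  have hclosed : Stmt9Aux.Fm n S x (n*(n-1)) = Stmt9Aux.Fm n S x 0 := Stmt9Aux.Fm_N n hn S h x
  have hseg : segProd n S a L k = Stmt9Aux.Fm n S x a := by
    rw [← hx]; exact Stmt9Aux.seg_eq n hn S x a L
  rw [hseg, ← hx]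
  rcases le_or_gt (a + L) (n*(n-1)) with hle | hgt
  · exact Stmt9Traj.traj_bound n hn _ hstep hclosed a (a+L) (by omega) hle
  · have hm : a + L = n*(n-1) + (a + L - n*(n-1)) := by omega
    rw [hm, Stmt9Aux.Fm_period n hn S h x]
    exact Stmt9Traj.traj_bound n hn _ hstep hclosed a (a + L - n*(n-1)) (by omega) (by omega)
end

section
/- Let n ≥ 2, N = n(n−1), and let u = [u_1, …, u_N] be a subword of λ̂_n with u_1 u_2 ⋯ u_N = e. Then for every j = 0, 1, …, N−1 one has |u_{(j)}(j+1) − u_{(j)}(j)| ≤ n − 1; equivalently, every reflection ((a,b)) occurring in inv(u) can be written with |b − a| ≤ n − 1. -/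
namespace Stmt10Aux

/-! ### Value lemmas for `affRefl` -/

lemma affRefl_left {n : ℕ} {i j k : ℤ} (h1 : (k - i) % (n : ℤ) = 0) :
    affRefl n i j k = k - i + j := by
  simp [affRefl, h1]

lemma affRefl_right {n : ℕ} {i j k : ℤ} (h1 : (k - i) % (n : ℤ) ≠ 0)
    (h2 : (k - j) % (n : ℤ) = 0) : affRefl n i j k = k - j + i := by
  simp [affRefl, h1, h2]

lemma affRefl_other {n : ℕ} {i j k : ℤ} (h1 : (k - i) % (n : ℤ) ≠ 0)
    (h2 : (k - j) % (n : ℤ) ≠ 0) : affRefl n i j k = k := by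
  simp [affRefl, h1, h2]

def Per (n : ℕ) (f : ℤ → ℤ) : Prop := ∀ k, f (k + (n : ℤ)) = f k + (n : ℤ)

lemma shift_emod {n : ℕ} (a i : ℤ) : (a + (n : ℤ) - i) % (n : ℤ) = (a - i) % (n : ℤ) := by
  have h : a + (n : ℤ) - i = (a - i) + (n : ℤ) * 1 := by ring
  rw [h, Int.add_mul_emod_self_left]

lemma per_affRefl (n : ℕ) (i j : ℤ) : Per n (affRefl n i j) := by
  intro k
  unfold affRefl
  rw [shift_emod, shift_emod]
  split_ifs <;> ring

lemma per_id (n : ℕ) : Per n id := fun _ => rfl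

lemma per_comp {n : ℕ} {f g : ℤ → ℤ} (hf : Per n f) (hg : Per n g) : Per n (f ∘ g) := by
  intro k
  simp only [Function.comp_apply, hg k, hf (g k)]

lemma not_dvd_small {n : ℕ} {d : ℤ} (h1 : d ≠ 0) (h2 : -(n : ℤ) < d) (h3 : d < (n : ℤ)) :
    ¬ (n : ℤ) ∣ d := by
  rintro ⟨q, rfl⟩
  have hn0 : (0 : ℤ) < (n : ℤ) := by linarith
  rcases lt_trichotomy q 0 with hq | rfl | hq
  · have : (n : ℤ) * q ≤ (n : ℤ) * (-1) := by
      apply mul_le_mul_of_nonneg_left (by omega) (le_of_lt hn0)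
    linarith
  · simp at h1
  · have : (n : ℤ) * 1 ≤ (n : ℤ) * q := by
      apply mul_le_mul_of_nonneg_left (by omega) (le_of_lt hn0)
    linarith

lemma eq_zero_of_small_mul {n : ℕ} {q d : ℤ} (hd : d = (n : ℤ) * q)
    (h2 : -(n : ℤ) < d) (h3 : d < (n : ℤ)) : d = 0 := by
  by_contra h1
  exact not_dvd_small h1 h2 h3 ⟨q, hd⟩

lemma simpleRefl_self {n : ℕ} (j : ℤ) : simpleRefl n j j = j + 1 := by
  have h : (j - j) % (n : ℤ) = 0 := by simp
  rw [simpleRefl, affRefl_left h]; ring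

lemma simpleRefl_succ {n : ℕ} (hn : 2 ≤ n) (j : ℤ) : simpleRefl n j (j + 1) = j := by
  have h1 : (j + 1 - j) % (n : ℤ) ≠ 0 := by
    rw [show j + 1 - j = 1 by ring,
      Int.emod_eq_of_lt (by norm_num) (by exact_mod_cast hn)]
    norm_num
  have h2 : (j + 1 - (j + 1)) % (n : ℤ) = 0 := by simp
  rw [simpleRefl, affRefl_right h1 h2]; ring

lemma simpleRefl_fix {n : ℕ} {j s : ℤ} (h2 : 2 ≤ s) (hs : s ≤ (n : ℤ) - 1) :
    simpleRefl n j (j + s) = j + s := by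
  apply affRefl_other
  · rw [show j + s - j = s by ring, Int.emod_eq_of_lt (by linarith) (by linarith)]
    linarith
  · rw [show j + s - (j + 1) = s - 1 by ring,
      Int.emod_eq_of_lt (by linarith) (by linarith)]
    linarith

lemma simpleRefl_invol {n : ℕ} (hn : 2 ≤ n) (j k : ℤ) :
    simpleRefl n j (simpleRefl n j k) = k := by
  by_cases h1 : (k - j) % (n : ℤ) = 0
  · have e1 : simpleRefl n j k = k + 1 := by
      rw [simpleRefl, affRefl_left h1]; ring
    rw [e1]
    have hd : (n : ℤ) ∣ (k - j) := Int.dvd_of_emod_eq_zero h1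
    have h1' : (k + 1 - j) % (n : ℤ) ≠ 0 := by
      intro hd2
      have hd2' : (n : ℤ) ∣ (k + 1 - j) := Int.dvd_of_emod_eq_zero hd2
      have hone : (n : ℤ) ∣ 1 := by
        have := hd2'.sub hd
        simpa [show k + 1 - j - (k - j) = 1 by ring] using this
      have := Int.le_of_dvd one_pos hone
      have hn2 : (2 : ℤ) ≤ (n : ℤ) := by exact_mod_cast hn
      linarith
    have h2' : (k + 1 - (j + 1)) % (n : ℤ) = 0 := by
      simpa [show k + 1 - (j + 1) = k - j by ring] using h1
    rw [simpleRefl, affRefl_right h1' h2']; ring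
  · by_cases h2 : (k - (j + 1)) % (n : ℤ) = 0
    · have e1 : simpleRefl n j k = k - 1 := by
        rw [simpleRefl, affRefl_right h1 h2]; ring
      rw [e1]
      have h1' : (k - 1 - j) % (n : ℤ) = 0 := by
        simpa [show k - 1 - j = k - (j + 1) by ring] using h2
      rw [simpleRefl, affRefl_left h1']; ring
    · rw [simpleRefl]
      rw [affRefl_other h1 h2, affRefl_other h1 h2]

end Stmt10Aux

namespace Stmt10Aux

section lists
variable (n : ℕ) (S : Finset ℕ)

lemma listProd_nil : listProd [] = id := rfl

lemma listProd_cons (f : ℤ → ℤ) (l : List (ℤ → ℤ)) : listProd (f :: l) = f ∘ listProd l := rfl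

lemma listProd_append_single (l : List (ℤ → ℤ)) (g : ℤ → ℤ) :
    listProd (l ++ [g]) = listProd l ∘ g := by
  induction l with
  | nil => rfl
  | cons x t ih =>
    show x ∘ listProd (t ++ [g]) = (x ∘ listProd t) ∘ g
    rw [ih]; rfl

lemma per_listProd (l : List (ℤ → ℤ)) (h : ∀ f ∈ l, Per n f) : Per n (listProd l) := by
  induction l with
  | nil => exact per_id n
  | cons x t ih =>
    rw [listProd_cons]
    exact per_comp (h x (by simp)) (ih fun f hf => h f (by simp [hf]))

lemma listProd_rev_inv {l : List (ℤ → ℤ)} (h : ∀ f ∈ l, ∀ k, f (f k) = k) :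
    (∀ v, listProd l.reverse (listProd l v) = v) ∧
      (∀ v, listProd l (listProd l.reverse v) = v) := by
  induction l with
  | nil => exact ⟨fun _ => rfl, fun _ => rfl⟩
  | cons x t ih =>
    obtain ⟨ih1, ih2⟩ := ih (fun f hf k => h f (by simp [hf]) k)
    have hrev : (x :: t).reverse = t.reverse ++ [x] := by simp
    constructor
    · intro v
      rw [hrev, listProd_append_single, listProd_cons]
      show listProd t.reverse (x (x (listProd t v))) = v
      rw [h x (by simp) (listProd t v)]
      exact ih1 v
    · intro v
      rw [hrev, listProd_append_single, listProd_cons]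
      show x (listProd t (listProd t.reverse (x v))) = v
      rw [ih2 (x v)]
      exact h x (by simp) v

lemma subword_length : (subword n S).length = n * (n - 1) := by simp [subword]

lemma mem_subword {f : ℤ → ℤ} (hf : f ∈ subword n S) : ∃ i, f = letterAt n S i := by
  simp only [subword, List.mem_map, List.mem_range] at hf
  obtain ⟨i, _, rfl⟩ := hf
  exact ⟨i, rfl⟩

lemma mem_take_subword {j : ℕ} {f : ℤ → ℤ} (hf : f ∈ (subword n S).take j) :
    ∃ i, f = letterAt n S i :=
  mem_subword n S (List.take_subset j _ hf)

lemma letter_per (j : ℕ) : Per n (letterAt n S j) := by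
  unfold letterAt
  split_ifs
  · exact per_id n
  · exact per_affRefl n _ _

lemma letter_invol (hn : 2 ≤ n) (j : ℕ) (k : ℤ) :
    letterAt n S j (letterAt n S j k) = k := by
  unfold letterAt
  split_ifs with h
  · rfl
  · exact simpleRefl_invol hn _ k

lemma per_uPref (j : ℕ) : Per n (uPref n S j) :=
  per_listProd n _ (fun f hf => by
    obtain ⟨i, rfl⟩ := mem_take_subword n S hf
    exact letter_per n S i)

lemma per_uPrefInv (j : ℕ) : Per n (uPrefInv n S j) :=
  per_listProd n _ (fun f hf => by
    obtain ⟨i, rfl⟩ := mem_take_subword n S (List.mem_reverse.mp hf)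
    exact letter_per n S i)

lemma uPrefInv_uPref (hn : 2 ≤ n) (j : ℕ) (v : ℤ) :
    uPrefInv n S j (uPref n S j v) = v := by
  refine (listProd_rev_inv (l := (subword n S).take j) ?_).1 v
  intro f hf k
  obtain ⟨i, rfl⟩ := mem_take_subword n S hf
  exact letter_invol n S hn i k

lemma uPref_uPrefInv (hn : 2 ≤ n) (j : ℕ) (v : ℤ) :
    uPref n S j (uPrefInv n S j v) = v := by
  refine (listProd_rev_inv (l := (subword n S).take j) ?_).2 v
  intro f hf k
  obtain ⟨i, rfl⟩ := mem_take_subword n S hf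
  exact letter_invol n S hn i k

lemma uPref_inj (hn : 2 ≤ n) {j : ℕ} {a b : ℤ} (hab : uPref n S j a = uPref n S j b) :
    a = b := by
  have := congrArg (uPrefInv n S j) hab
  rwa [uPrefInv_uPref n S hn, uPrefInv_uPref n S hn] at this

lemma take_succ_subword {j : ℕ} (hj : j < n * (n - 1)) :
    (subword n S).take (j + 1) = (subword n S).take j ++ [letterAt n S j] := by
  rw [List.take_succ]
  congr 1
  have hj' : j < (subword n S).length := by rw [subword_length]; exact hj
  rw [List.getElem?_eq_getElem hj']
  simp [subword]

lemma uPref_succ {j : ℕ} (hj : j < n * (n - 1)) :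
    uPref n S (j + 1) = uPref n S j ∘ letterAt n S j := by
  unfold uPref
  rw [take_succ_subword n S hj, listProd_append_single]

lemma uPrefInv_succ {j : ℕ} (hj : j < n * (n - 1)) :
    uPrefInv n S (j + 1) = letterAt n S j ∘ uPrefInv n S j := by
  unfold uPrefInv
  rw [take_succ_subword n S hj, List.reverse_append]
  rfl

lemma uPref_zero : uPref n S 0 = id := rfl

lemma uPrefInv_zero : uPrefInv n S 0 = id := rfl

lemma uPref_N (h : listProd (subword n S) = id) : uPref n S (n * (n - 1)) = id := by
  unfold uPref
  rw [← subword_length n S, List.take_length, h]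

lemma per_shift {n : ℕ} {f : ℤ → ℤ} (hf : Per n f) (q k : ℤ) :
    f (k + q * (n : ℤ)) = f k + q * (n : ℤ) := by
  induction q using Int.induction_on with
  | zero => simp
  | succ i ih =>
    have h1 : k + ((i : ℤ) + 1) * (n : ℤ) = (k + (i : ℤ) * (n : ℤ)) + (n : ℤ) := by ring
    rw [h1, hf (k + (i : ℤ) * (n : ℤ)), ih]; ring
  | pred i ih =>
    have h1 : k + (-(i : ℤ)) * (n : ℤ) = (k + (-(i : ℤ) - 1) * (n : ℤ)) + (n : ℤ) := by ring
    have h2 := hf (k + (-(i : ℤ) - 1) * (n : ℤ))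
    rw [← h1, ih] at h2
    linarith [h2]

end lists

end Stmt10Aux

namespace Stmt10Aux

def tgt (n : ℕ) (S : Finset ℕ) (j : ℕ) : ℤ := if j ∈ S then (j : ℤ) else (j : ℤ) + 1

def tok (n : ℕ) (S : Finset ℕ) (r : ℤ) : ℕ → ℤ
  | 0 => r
  | j + 1 => tok n S r j + (if tok n S r j = uPref n S j (tgt n S j) then (n : ℤ) else 0)

def zc (n : ℕ) (S : Finset ℕ) (r : ℤ) : ℕ → ℤ
  | 0 => 0
  | j + 1 => zc n S r j + (if tok n S r j = uPref n S j (j : ℤ) then 1 else 0)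

def slt (n : ℕ) (S : Finset ℕ) (r : ℤ) (j : ℕ) : ℤ := uPrefInv n S j (tok n S r j) - j

section toks
variable (n : ℕ) (S : Finset ℕ)

lemma zc_nonneg (r : ℤ) (j : ℕ) : 0 ≤ zc n S r j := by
  induction j with
  | zero => simp [zc]
  | succ j ih => simp only [zc]; split_ifs <;> omega

lemma zc_mono (r : ℤ) : Monotone (zc n S r) := by
  apply monotone_nat_of_le_succ
  intro j
  simp only [zc]; split_ifs <;> omega

lemma main_inv (hn : 2 ≤ n) (r : ℤ) (hr0 : 0 ≤ r) (hr1 : r ≤ (n : ℤ) - 1) :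
    ∀ j : ℕ, j ≤ n * (n - 1) →
      ((n : ℤ) ∣ (tok n S r j - r)) ∧
      (0 ≤ slt n S r j ∧ slt n S r j ≤ (n : ℤ) - 1) ∧
      ((n : ℤ) - 1) * (tok n S r j - r) =
        (n : ℤ) * ((j : ℤ) - r + slt n S r j - zc n S r j) := by
  have hn' : (2 : ℤ) ≤ (n : ℤ) := by exact_mod_cast hn
  intro j
  induction j with
  | zero =>
    intro _
    have hslt : slt n S r 0 = r := by simp [slt, tok, uPrefInv, listProd]
    refine ⟨by simp [tok], ?_, ?_⟩
    · rw [hslt]; exact ⟨hr0, hr1⟩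
    · rw [hslt]; simp only [tok, zc]; push_cast; ring
  | succ j ih =>
    intro hj1
    have hjN : j < n * (n - 1) := by omega
    obtain ⟨⟨c, hc⟩, ⟨hs0, hs1⟩, heq⟩ := ih (by omega)
    set v := tok n S r j with hv
    set s := slt n S r j with hs
    set z := zc n S r j with hz
    have hinv : uPrefInv n S j v = (j : ℤ) + s := by
      rw [hs]; simp only [slt, ← hv]; ring
    have hvs : uPref n S j ((j : ℤ) + s) = v := by
      rw [← hinv]; exact uPref_uPrefInv n S hn j v
    have htok : tok n S r (j + 1) = v + (if v = uPref n S j (tgt n S j) then (n : ℤ) else 0) := by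
      simp only [tok, ← hv]
    have hzc : zc n S r (j + 1) = z + (if v = uPref n S j (j : ℤ) then 1 else 0) := by
      simp only [zc, ← hv, ← hz]
    have hseq : slt n S r (j + 1) =
        letterAt n S j (uPrefInv n S j (tok n S r (j + 1))) - ((j : ℤ) + 1) := by
      simp only [slt, uPrefInv_succ n S hjN, Function.comp_apply]
      push_cast; ring
    by_cases hjS : j ∈ S
    · -- skip step: the letter is the identity
      have hlet : letterAt n S j = id := by simp [letterAt, hjS]
      have htgt : tgt n S j = (j : ℤ) := by simp [tgt, hjS]
      by_cases hC : v = uPref n S j (tgt n S j)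
      · -- recycled from slot 0
        have hC' : v = uPref n S j (j : ℤ) := by rwa [htgt] at hC
        have h0 : uPrefInv n S j v = (j : ℤ) := by
          rw [hC']; exact uPrefInv_uPref n S hn j _
        have hs00 : s = 0 := by rw [h0] at hinv; linarith
        have htok' : tok n S r (j + 1) = v + (n : ℤ) := by rw [htok, if_pos hC]
        have hzc' : zc n S r (j + 1) = z + 1 := by rw [hzc, if_pos hC']
        have hslt' : slt n S r (j + 1) = (n : ℤ) - 1 := by
          rw [hseq, htok', hlet, id_eq, per_uPrefInv n S j v, h0]
          ring
        refine ⟨⟨c + 1, by rw [htok']; linear_combination hc⟩, ?_, ?_⟩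
        · rw [hslt']; constructor <;> linarith
        · rw [htok', hslt', hzc']
          rw [hs00] at heq
          push_cast
          linear_combination heq
      · -- not recycled
        have htok' : tok n S r (j + 1) = v := by rw [htok, if_neg hC]; ring
        have hsne : s ≠ 0 := by
          intro h00
          exact hC (by rw [htgt, ← hvs, h00, add_zero])
        have hzc' : zc n S r (j + 1) = z := by
          rw [hzc, if_neg (fun hh => hC (by rwa [htgt]))]; ring
        have hslt' : slt n S r (j + 1) = s - 1 := by
          rw [hseq, htok', hlet, id_eq, hinv]; ring
        refine ⟨⟨c, by rw [htok']; exact hc⟩, ?_, ?_⟩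
        · rw [hslt']; constructor <;> [omega; linarith]
        · rw [htok', hslt', hzc']
          push_cast
          linear_combination heq
    · -- take step: the letter is the simple reflection
      have hlet : letterAt n S j = simpleRefl n (j : ℤ) := by simp [letterAt, hjS]
      have htgt : tgt n S j = (j : ℤ) + 1 := by simp [tgt, hjS]
      by_cases hC : v = uPref n S j (tgt n S j)
      · -- recycled from slot 1
        have hC' : v = uPref n S j ((j : ℤ) + 1) := by rwa [htgt] at hC
        have h0 : uPrefInv n S j v = (j : ℤ) + 1 := by
          rw [hC']; exact uPrefInv_uPref n S hn j _
        have hs11 : s = 1 := by rw [h0] at hinv; linarith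
        have htok' : tok n S r (j + 1) = v + (n : ℤ) := by rw [htok, if_pos hC]
        have hvne : v ≠ uPref n S j (j : ℤ) := by
          rw [hC']
          intro hh
          have := uPref_inj n S hn hh
          linarith
        have hzc' : zc n S r (j + 1) = z := by rw [hzc, if_neg hvne]; ring
        have hslt' : slt n S r (j + 1) = (n : ℤ) - 1 := by
          rw [hseq, htok', hlet, per_uPrefInv n S j v, h0]
          have hper := per_affRefl n (j : ℤ) ((j : ℤ) + 1) ((j : ℤ) + 1)
          show affRefl n (j : ℤ) ((j : ℤ) + 1) ((j : ℤ) + 1 + (n : ℤ)) - ((j : ℤ) + 1) =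
            (n : ℤ) - 1
          rw [hper]
          have := simpleRefl_succ (n := n) hn (j : ℤ)
          rw [simpleRefl] at this
          rw [this]
          ring
        refine ⟨⟨c + 1, by rw [htok']; linear_combination hc⟩, ?_, ?_⟩
        · rw [hslt']; constructor <;> linarith
        · rw [htok', hslt', hzc']
          rw [hs11] at heq
          push_cast
          linear_combination heq
      · -- not recycled
        have htok' : tok n S r (j + 1) = v := by rw [htok, if_neg hC]; ring
        have hsne1 : s ≠ 1 := by
          intro h11
          exact hC (by rw [htgt, ← hvs, h11])
        by_cases hs00 : s = 0
        · -- at slot 0, stays at slot 0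
          have hveq : v = uPref n S j (j : ℤ) := by
            rw [← hvs, hs00, add_zero]
          have hzc' : zc n S r (j + 1) = z + 1 := by rw [hzc, if_pos hveq]
          have hslt' : slt n S r (j + 1) = 0 := by
            rw [hseq, htok', hlet, hinv, hs00, add_zero, simpleRefl_self]
            ring
          refine ⟨⟨c, by rw [htok']; exact hc⟩, ?_, ?_⟩
          · rw [hslt']; constructor <;> linarith
          · rw [htok', hslt', hzc']
            rw [hs00] at heq
            push_cast
            linear_combination heq
        · -- at slot ≥ 2
          have hs2 : 2 ≤ s := by omega
          have hvne : v ≠ uPref n S j (j : ℤ) := by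
            intro hh
            apply hs00
            have h0 : uPrefInv n S j v = (j : ℤ) := by
              rw [hh]; exact uPrefInv_uPref n S hn j _
            rw [h0] at hinv; linarith
          have hzc' : zc n S r (j + 1) = z := by rw [hzc, if_neg hvne]; ring
          have hslt' : slt n S r (j + 1) = s - 1 := by
            rw [hseq, htok', hlet, hinv, simpleRefl_fix hs2 hs1]
            ring
          refine ⟨⟨c, by rw [htok']; exact hc⟩, ?_, ?_⟩
          · rw [hslt']; constructor <;> linarith
          · rw [htok', hslt', hzc']
            push_cast
            linear_combination heq

end toks

end Stmt10Aux

namespace Stmt10Aux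

section final
variable (n : ℕ) (S : Finset ℕ)

lemma zc_N (hn : 2 ≤ n) (h : listProd (subword n S) = id) (r : ℤ)
    (hr0 : 0 ≤ r) (hr1 : r ≤ (n : ℤ) - 1) :
    zc n S r (n * (n - 1)) = (n : ℤ) - 1 := by
  have hn' : (2 : ℤ) ≤ (n : ℤ) := by exact_mod_cast hn
  obtain ⟨⟨c, hc⟩, ⟨hs0, hs1⟩, heq⟩ := main_inv n S hn r hr0 hr1 (n * (n - 1)) le_rfl
  have h1 : (1 : ℕ) ≤ n := by omega
  have hNZ : ((n * (n - 1) : ℕ) : ℤ) = (n : ℤ) * ((n : ℤ) - 1) := by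
    rw [Nat.cast_mul, Nat.cast_sub h1]
    push_cast
    ring
  have hid : uPref n S (n * (n - 1)) = id := uPref_N n S h
  have hinv : ∀ v, uPrefInv n S (n * (n - 1)) v = v := by
    intro v
    have h2 := uPrefInv_uPref n S hn (n * (n - 1)) v
    rwa [hid, id_eq] at h2
  have hslt : slt n S r (n * (n - 1)) = tok n S r (n * (n - 1)) - ((n * (n - 1) : ℕ) : ℤ) := by
    simp only [slt, hinv]
  set v := tok n S r (n * (n - 1)) with hv
  rw [hslt, hNZ] at hs0 hs1 heq
  have key : v - r - (n : ℤ) * ((n : ℤ) - 1) = (n : ℤ) * (c - ((n : ℤ) - 1)) := by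
    linear_combination hc
  have hz0 := eq_zero_of_small_mul key (by linarith) (by linarith)
  have hveq : v = r + (n : ℤ) * ((n : ℤ) - 1) := by linarith
  rw [hveq] at heq
  have hnne : (n : ℤ) ≠ 0 := by linarith
  have h3 : (n : ℤ) * (zc n S r (n * (n - 1)) - ((n : ℤ) - 1)) = 0 := by
    linear_combination heq
  rcases mul_eq_zero.mp h3 with h4 | h4
  · exact absurd h4 hnne
  · linarith

lemma zc_zero_one : zc n S 0 1 = 1 := by
  simp [zc, tok, uPref_zero]

lemma tok_eq_of_res (hn : 2 ≤ n) {r : ℤ} (hr0 : 0 ≤ r) (hr1 : r ≤ (n : ℤ) - 1)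
    {j : ℕ} (hj : j ≤ n * (n - 1)) {p : ℤ} (hp0 : 0 ≤ p) (hp1 : p ≤ (n : ℤ) - 1)
    (hres : (n : ℤ) ∣ (uPref n S j ((j : ℤ) + p) - r)) :
    tok n S r j = uPref n S j ((j : ℤ) + p) ∧ slt n S r j = p := by
  have hn' : (2 : ℤ) ≤ (n : ℤ) := by exact_mod_cast hn
  obtain ⟨⟨c, hc⟩, ⟨hs0, hs1⟩, _⟩ := main_inv n S hn r hr0 hr1 j hj
  obtain ⟨q, hq⟩ := hres
  set v := tok n S r j with hv
  have hvs : uPref n S j ((j : ℤ) + slt n S r j) = v := by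
    have h2 : uPrefInv n S j v = (j : ℤ) + slt n S r j := by
      simp only [slt, ← hv]; ring
    rw [← h2]; exact uPref_uPrefInv n S hn j v
  have hdiff : v - uPref n S j ((j : ℤ) + p) = (n : ℤ) * (c - q) := by
    linear_combination hc - hq
  have hshift := per_shift (per_uPref n S j) (c - q) ((j : ℤ) + p)
  have hveq : uPref n S j ((j : ℤ) + slt n S r j) =
      uPref n S j ((j : ℤ) + p + (c - q) * (n : ℤ)) := by
    rw [hshift, hvs]
    linear_combination hdiff
  have hinj := uPref_inj n S hn hveq
  have hsp : slt n S r j - p = (n : ℤ) * (c - q) := by linear_combination hinj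
  have h0 := eq_zero_of_small_mul hsp (by linarith) (by linarith)
  have hslteq : slt n S r j = p := by linarith
  refine ⟨?_, hslteq⟩
  rw [← hvs, hslteq]

lemma final_arith {n r r'' z z'' c c'' jz : ℤ} (hn : 2 ≤ n)
    (hr0 : 0 ≤ r) (hr1 : r ≤ n - 1) (hr0' : 0 ≤ r'') (hr1' : r'' ≤ n - 1) (hne : r ≠ r'')
    (hz0 : 0 ≤ z) (hz1 : z ≤ n - 2) (hz0' : 0 ≤ z'') (hz1' : z'' ≤ n - 1)
    (h0 : r'' = 0 → 1 ≤ z'')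
    (e0 : (n - 1) * c = jz - r - z) (e1 : (n - 1) * c'' = jz + 1 - r'' - z'') :
    |(r'' + n * c'') - (r + n * c)| ≤ n - 1 := by
  have key : (n - 1) * (c'' - c) = r - r'' + 1 + z - z'' := by linear_combination e1 - e0
  have h2 : c'' - c ≤ 2 := by
    by_contra hcon
    push_neg at hcon
    have h3 : (n - 1) * 3 ≤ (n - 1) * (c'' - c) :=
      mul_le_mul_of_nonneg_left (by omega) (by omega)
    linarith
  have hm1 : -1 ≤ c'' - c := by
    by_contra hcon
    push_neg at hcon
    have h3 : (n - 1) * (c'' - c) ≤ (n - 1) * (-2) :=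
      mul_le_mul_of_nonneg_left (by omega) (by omega)
    linarith
  have hcase : c'' - c = -1 ∨ c'' - c = 0 ∨ c'' - c = 1 ∨ c'' - c = 2 := by omega
  have hgoal : (r'' + n * c'') - (r + n * c) = r'' - r + n * (c'' - c) := by ring
  rw [hgoal, abs_le]
  rcases hcase with hd | hd | hd | hd <;> rw [hd] at key ⊢
  · constructor <;> linarith
  · constructor <;> [linarith; (rcases lt_or_gt_of_ne hne with hlt | hlt <;> linarith)]
  · have h4 : 0 ≤ r - r'' := by linarith
    have h5 : 1 ≤ r - r'' := by omega
    constructor <;> linarith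
  · exfalso
    have hz''0 : z'' = 0 := by linarith
    have hr''0 : r'' = 0 := by linarith
    have := h0 hr''0
    linarith

end final

end Stmt10Aux

open Stmt10Aux

/-- For an `e`-subword `u` of `λ̂ₙ`, for every `j = 0, …, N-1` one has
`|u_{(j)}(j+1) - u_{(j)}(j)| ≤ n - 1`; i.e. every reflection of `inv(u)` can be
written as `((a,b))` with `|b - a| ≤ n - 1`. -/
theorem stmt10 (n : ℕ) (hn : 2 ≤ n) (S : Finset ℕ)
    (hS : S ⊆ Finset.range (n * (n - 1)))
    (h : listProd (subword n S) = id) :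
    ∀ j : ℕ, j < n * (n - 1) →
      |uPref n S j ((j : ℤ) + 1) - uPref n S j (j : ℤ)| ≤ (n : ℤ) - 1 := by
  intro j hj
  have hn' : (2 : ℤ) ≤ (n : ℤ) := by exact_mod_cast hn
  rcases Nat.eq_zero_or_pos j with rfl | hj0
  · rw [uPref_zero]
    simp only [id_eq, Nat.cast_zero]
    rw [show |(0 : ℤ) + 1 - 0| = 1 by norm_num]
    linarith
  · have hnne : (n : ℤ) ≠ 0 := by linarith
    have hn0 : (0 : ℤ) < (n : ℤ) := by linarith
    have hjle : j ≤ n * (n - 1) := le_of_lt hj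
    set v0 := uPref n S j (j : ℤ) with hv0
    set v1 := uPref n S j ((j : ℤ) + 1) with hv1
    set r := v0 % (n : ℤ) with hr
    set r'' := v1 % (n : ℤ) with hr''
    have hr0 : 0 ≤ r := Int.emod_nonneg v0 hnne
    have hr1 : r ≤ (n : ℤ) - 1 := by
      have := Int.emod_lt_of_pos v0 hn0; omega
    have hr0' : 0 ≤ r'' := Int.emod_nonneg v1 hnne
    have hr1' : r'' ≤ (n : ℤ) - 1 := by
      have := Int.emod_lt_of_pos v1 hn0; omega
    have hdvd0 : (n : ℤ) ∣ (v0 - r) := ⟨v0 / (n : ℤ), by rw [hr, Int.emod_def]; ring⟩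
    have hdvd1 : (n : ℤ) ∣ (v1 - r'') := ⟨v1 / (n : ℤ), by rw [hr'', Int.emod_def]; ring⟩
    obtain ⟨htok0, hslt0⟩ := tok_eq_of_res n S hn hr0 hr1 hjle (le_refl (0 : ℤ))
      (by linarith) (by rw [add_zero, ← hv0]; exact hdvd0)
    obtain ⟨htok1, hslt1⟩ := tok_eq_of_res n S hn hr0' hr1' hjle (by norm_num : (0:ℤ) ≤ 1)
      (by linarith) (by rw [← hv1]; exact hdvd1)
    rw [add_zero, ← hv0] at htok0
    rw [← hv1] at htok1
    have hne : r ≠ r'' := by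
      intro hrr
      obtain ⟨a, ha⟩ := hdvd0
      obtain ⟨b, hb⟩ := hdvd1
      rw [hrr] at ha
      have hdd : v1 = uPref n S j ((j : ℤ) + (b - a) * (n : ℤ)) := by
        rw [per_shift (per_uPref n S j) (b - a) ((j : ℤ)), ← hv0]
        linear_combination hb - ha
      rw [hv1] at hdd
      have h2 := uPref_inj n S hn hdd
      have h3 : (1 : ℤ) - 0 = (n : ℤ) * (b - a) := by linear_combination h2
      have h4 := eq_zero_of_small_mul h3 (by linarith) (by linarith)
      linarith
    have hzN := zc_N n S hn h r hr0 hr1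
    have hzN'' := zc_N n S hn h r'' hr0' hr1'
    have hz0 : 0 ≤ zc n S r j := zc_nonneg n S r j
    have hz0'' : 0 ≤ zc n S r'' j := zc_nonneg n S r'' j
    have hz1' : zc n S r'' j ≤ (n : ℤ) - 1 := by
      rw [← hzN'']; exact zc_mono n S r'' hjle
    have hz1 : zc n S r j ≤ (n : ℤ) - 2 := by
      have hstep : zc n S r (j + 1) = zc n S r j + 1 := by
        simp only [zc]
        rw [if_pos htok0]
      have hb : zc n S r (j + 1) ≤ (n : ℤ) - 1 := by
        rw [← hzN]; exact zc_mono n S r (by omega)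
      omega
    have hz01 : r'' = 0 → 1 ≤ zc n S r'' j := by
      intro hr''0
      rw [hr''0]
      have h1 := zc_zero_one n S
      have h2 := zc_mono n S 0 (show 1 ≤ j by omega)
      omega
    obtain ⟨⟨c, hc⟩, _, heq0⟩ := main_inv n S hn r hr0 hr1 j hjle
    obtain ⟨⟨c'', hc''⟩, _, heq1⟩ := main_inv n S hn r'' hr0' hr1' j hjle
    rw [htok0] at hc
    rw [htok1] at hc''
    rw [htok0, hslt0] at heq0
    rw [htok1, hslt1] at heq1
    have e0 : ((n : ℤ) - 1) * c = (j : ℤ) - r - zc n S r j := by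
      have hmul : (n : ℤ) * (((n : ℤ) - 1) * c) = (n : ℤ) * ((j : ℤ) - r - zc n S r j) := by
        linear_combination heq0 - ((n : ℤ) - 1) * hc
      exact mul_left_cancel₀ hnne hmul
    have e1 : ((n : ℤ) - 1) * c'' = (j : ℤ) + 1 - r'' - zc n S r'' j := by
      have hmul : (n : ℤ) * (((n : ℤ) - 1) * c'') =
          (n : ℤ) * ((j : ℤ) + 1 - r'' - zc n S r'' j) := by
        linear_combination heq1 - ((n : ℤ) - 1) * hc''
      exact mul_left_cancel₀ hnne hmul
    have hfin := final_arith hn' hr0 hr1 hr0' hr1' hne hz0 hz1 hz0'' hz1' hz01 e0 e1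
    have hv0e : v0 = r + (n : ℤ) * c := by linarith [hc]
    have hv1e : v1 = r'' + (n : ℤ) * c'' := by linarith [hc'']
    rw [hv1e, hv0e] at *
    exact hfin
end

section
/- (Cayley's formula) For every integer n ≥ 2, the number of simple graphs on the vertex set {1, …, n} that are trees (connected and acyclic) equals n^{n−2}. -/
open SimpleGraph
attribute [local instance] Classical.propDecidable

namespace Cayley
variable {V : Type} [Fintype V] [LinearOrder V]

def IsLeaf (G : SimpleGraph V) (v : V) : Prop := ∃! w, G.Adj v w
noncomputable def leafOpt (G : SimpleGraph V) : Option V :=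
  (Finset.univ.filter (fun v => IsLeaf G v)).min
noncomputable def nbrOf (G : SimpleGraph V) (v : V) : V :=
  if h : ∃ w, G.Adj v w then h.choose else v
def delSet (ℓ : V) : Set V := {x : V | x ≠ ℓ}
noncomputable def toSub (ℓ : V) (x : V) : Option (delSet ℓ) :=
  if h : x ≠ ℓ then some ⟨x, h⟩ else none
noncomputable def addLeaf (ℓ c : V) (T' : SimpleGraph (delSet ℓ)) : SimpleGraph V :=
  SimpleGraph.fromRel
    (fun a b => (∃ (ha : a ≠ ℓ) (hb : b ≠ ℓ), T'.Adj ⟨a, ha⟩ ⟨b, hb⟩) ∨ (a = ℓ ∧ b = c))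


noncomputable def pcode : (m : ℕ) → (V : Type) → [Fintype V] → [LinearOrder V] →
    SimpleGraph V → List V
  | 0, _, _, _, _ => []
  | (m+1), V, _, _, G =>
    match leafOpt G with
    | none => []
    | some ℓ => nbrOf G ℓ :: (pcode m (delSet ℓ) (G.induce (delSet ℓ))).map Subtype.val

noncomputable def pdecode : (m : ℕ) → (V : Type) → [Fintype V] → [LinearOrder V] →
    List V → SimpleGraph V
  | 0, _, _, _, _ => ⊤
  | (m+1), V, _, _, l =>
    match l with
    | [] => ⊤
    | c :: l' =>
      match (Finset.univ \ (c :: l').toFinset).min with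
      | none => ⊤
      | some ℓ => addLeaf ℓ c (pdecode m (delSet ℓ) (l'.filterMap (toSub ℓ)))

-- list lemmas
lemma toSub_map_val (ℓ : V) : ∀ l : List (delSet ℓ), (l.map Subtype.val).filterMap (toSub ℓ) = l
  | [] => rfl
  | x :: l => by
      have hx : toSub ℓ x.val = some x := by rw [toSub, dif_pos (show (x:V) ≠ ℓ from x.2)]
      simp only [List.map_cons, List.filterMap_cons, hx, toSub_map_val ℓ l]

lemma map_val_toSub (ℓ : V) : ∀ l : List V, (∀ x ∈ l, x ≠ ℓ) →
    (l.filterMap (toSub ℓ)).map Subtype.val = l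
  | [], _ => rfl
  | x :: l, h => by
      have hx : x ≠ ℓ := h x (by simp)
      have hx' : toSub ℓ x = some ⟨x, hx⟩ := by rw [toSub, dif_pos hx]
      simp only [List.filterMap_cons, hx', List.map_cons,
        map_val_toSub ℓ l (fun y hy => h y (by simp [hy]))]

lemma length_toSub (ℓ : V) (l : List V) (h : ∀ x ∈ l, x ≠ ℓ) :
    (l.filterMap (toSub ℓ)).length = l.length := by
  conv_rhs => rw [← map_val_toSub ℓ l h]
  simp

lemma mem_toSub (ℓ : V) (l : List V) (h : ∀ x ∈ l, x ≠ ℓ) (x : delSet ℓ) :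
    x ∈ l.filterMap (toSub ℓ) ↔ (x : V) ∈ l := by
  conv_rhs => rw [← map_val_toSub ℓ l h]
  rw [List.mem_map]
  constructor
  · exact fun hx => ⟨x, hx, rfl⟩
  · rintro ⟨y, hy, hxy⟩
    rwa [Subtype.val_injective hxy] at hy

-- addLeaf adjacency
lemma addLeaf_adj_left {ℓ c : V} (hc : c ≠ ℓ) (T' : SimpleGraph (delSet ℓ)) (x : V) :
    (addLeaf ℓ c T').Adj ℓ x ↔ x = c := by
  rw [addLeaf, SimpleGraph.fromRel_adj]
  constructor
  · rintro ⟨hne, ((⟨ha, _, _⟩ | ⟨_, hxc⟩) | (⟨_, hb⟩ | ⟨hxl, _⟩))⟩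
    · exact absurd rfl ha
    · exact hxc
    · rename_i hb; exact absurd rfl (by exact hb.1)
    · exact absurd hxl.symm hne
  · rintro rfl
    exact ⟨fun h => hc h.symm, Or.inl (Or.inr ⟨rfl, rfl⟩)⟩

lemma addLeaf_adj_ne {ℓ c : V} (T' : SimpleGraph (delSet ℓ)) {a b : V}
    (ha : a ≠ ℓ) (hb : b ≠ ℓ) :
    (addLeaf ℓ c T').Adj a b ↔ T'.Adj ⟨a, ha⟩ ⟨b, hb⟩ := by
  rw [addLeaf, SimpleGraph.fromRel_adj]
  constructor
  · rintro ⟨hne, ((⟨ha', hb', h⟩ | ⟨hal, _⟩) | (⟨hb', ha', h⟩ | ⟨hbl, _⟩))⟩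
    · exact h
    · exact absurd hal ha
    · exact h.symm
    · exact absurd hbl hb
  · intro h
    refine ⟨fun hab => ?_, Or.inl (Or.inl ⟨ha, hb, h⟩)⟩
    apply h.ne
    simp [Subtype.ext_iff, hab]

lemma addLeaf_induce {ℓ c : V} (T' : SimpleGraph (delSet ℓ)) :
    (addLeaf ℓ c T').induce (delSet ℓ) = T' := by
  ext ⟨a, ha⟩ ⟨b, hb⟩
  simp only [SimpleGraph.comap_adj, Function.Embedding.coe_subtype]
  exact addLeaf_adj_ne T' ha hb



section Lift
variable {V : Type} {G : SimpleGraph V} {s : Set V}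

/-- Lift a walk whose support lies in `s` to the induced subgraph on `s`. -/
def liftWalk : ∀ {u v : V} (p : G.Walk u v) (hp : ∀ x ∈ p.support, x ∈ s),
    (G.induce s).Walk ⟨u, hp u p.start_mem_support⟩ ⟨v, hp v p.end_mem_support⟩
  | _, _, SimpleGraph.Walk.nil, _ => SimpleGraph.Walk.nil
  | u, v, SimpleGraph.Walk.cons h p, hp =>
      SimpleGraph.Walk.cons (by simpa using h)
        (liftWalk p (fun x hx => hp x (by simp [hx])))

lemma support_liftWalk : ∀ {u v : V} (p : G.Walk u v) (hp : ∀ x ∈ p.support, x ∈ s),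
    (liftWalk p hp).support.map Subtype.val = p.support
  | _, _, SimpleGraph.Walk.nil, _ => rfl
  | u, v, SimpleGraph.Walk.cons h p, hp => by
      simp only [liftWalk, SimpleGraph.Walk.support_cons, List.map_cons,
        support_liftWalk p (fun x hx => hp x (by simp [hx]))]

lemma edges_liftWalk : ∀ {u v : V} (p : G.Walk u v) (hp : ∀ x ∈ p.support, x ∈ s),
    (liftWalk p hp).edges.map (Sym2.map Subtype.val) = p.edges
  | _, _, SimpleGraph.Walk.nil, _ => rfl
  | u, v, SimpleGraph.Walk.cons h p, hp => by
      simp only [liftWalk, SimpleGraph.Walk.edges_cons, List.map_cons,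
        edges_liftWalk p (fun x hx => hp x (by simp [hx]))]
      rfl

lemma length_liftWalk : ∀ {u v : V} (p : G.Walk u v) (hp : ∀ x ∈ p.support, x ∈ s),
    (liftWalk p hp).length = p.length
  | _, _, SimpleGraph.Walk.nil, _ => rfl
  | u, v, SimpleGraph.Walk.cons h p, hp => by
      simp only [liftWalk, SimpleGraph.Walk.length_cons,
        length_liftWalk p (fun x hx => hp x (by simp [hx]))]

/-- A cycle whose support lies in `s` gives a cycle in the induced subgraph. -/
lemma liftWalk_isCycle {u : V} (p : G.Walk u u) (hc : p.IsCycle)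
    (hp : ∀ x ∈ p.support, x ∈ s) : (liftWalk p hp).IsCycle := by
  refine ⟨⟨⟨?_⟩, ?_⟩, ?_⟩
  · have := hc.edges_nodup
    rw [← edges_liftWalk p hp] at this
    exact this.of_map _
  · intro h
    have h3 := hc.three_le_length
    have : (liftWalk p hp).length = 0 := by rw [h]; rfl
    rw [length_liftWalk] at this
    omega
  · have := hc.support_nodup
    rw [← support_liftWalk p hp] at this
    rw [← List.map_tail] at this
    exact this.of_map _

lemma reachable_induce_of_walk {u v : V} (p : G.Walk u v) (hp : ∀ x ∈ p.support, x ∈ s) :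
    (G.induce s).Reachable ⟨u, hp u p.start_mem_support⟩ ⟨v, hp v p.end_mem_support⟩ :=
  ⟨liftWalk p hp⟩

/-- acyclicity passes to induced subgraphs -/
lemma IsAcyclic.induce (h : G.IsAcyclic) (s : Set V) : (G.induce s).IsAcyclic := by
  intro v p hp
  have := hp.map (f := (SimpleGraph.Embedding.induce (G := G) s).toHom)
    (SimpleGraph.Embedding.induce (G := G) s).injective
  exact h _ this

end Lift

variable {G : SimpleGraph V}

lemma exists_adj_of_connected (hG : G.Connected) (h2 : 2 ≤ Fintype.card V) (v : V) :
    ∃ w, G.Adj v w := by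
  have : Nontrivial V := Fintype.one_lt_card_iff_nontrivial.mp h2
  obtain ⟨w, hw⟩ := exists_ne v
  obtain ⟨p⟩ := hG.preconnected v w
  cases p with
  | nil => exact absurd rfl hw
  | cons h p => exact ⟨_, h⟩

lemma exists_leaf (hG : G.Connected) (hA : G.IsAcyclic) (h2 : 2 ≤ Fintype.card V) :
    ∃ v, IsLeaf G v := by
  classical
  letI : DecidableRel G.Adj := fun a b => Classical.dec _
  have htree : G.IsTree := ⟨hG, hA⟩
  have hedge : G.edgeFinset.card + 1 = Fintype.card V := htree.card_edgeFinset
  have hsum : ∑ v, G.degree v = 2 * G.edgeFinset.card := G.sum_degrees_eq_twice_card_edges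
  have hdeg1 : ∀ v, 1 ≤ G.degree v := by
    intro v
    obtain ⟨w, hw⟩ := exists_adj_of_connected hG h2 v
    have : w ∈ G.neighborFinset v := by simpa using hw
    exact Finset.card_pos.mpr ⟨w, this⟩
  by_contra hno
  push_neg at hno
  have hdeg2 : ∀ v, 2 ≤ G.degree v := by
    intro v
    rcases Nat.lt_or_ge (G.degree v) 2 with h | h
    · exfalso
      have hd1 : G.degree v = 1 := le_antisymm (by omega) (hdeg1 v)
      obtain ⟨w, hw⟩ := Finset.card_eq_one.mp hd1
      apply hno v
      refine ⟨w, ?_, ?_⟩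
      · have : w ∈ G.neighborFinset v := hw ▸ Finset.mem_singleton_self w
        simpa using this
      · intro y hy
        have : y ∈ G.neighborFinset v := by simpa using hy
        rw [hw] at this
        simpa using this
    · exact h
  have : 2 * Fintype.card V ≤ ∑ v, G.degree v := by
    calc 2 * Fintype.card V = ∑ _v : V, 2 := by simp [mul_comm]
    _ ≤ ∑ v, G.degree v := Finset.sum_le_sum (fun v _ => hdeg2 v)
  omega

/-- A leaf is not an interior vertex of any path. -/
lemma leaf_not_mem_path_support {ℓ u v : V} (hℓ : IsLeaf G ℓ) {p : G.Walk u v}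
    (hp : p.IsPath) (hu : u ≠ ℓ) (hv : v ≠ ℓ) : ℓ ∉ p.support := by
  intro hmem
  -- decompose
  have hspec := p.take_spec hmem
  set q := p.takeUntil ℓ hmem with hq
  set r := p.dropUntil ℓ hmem with hr
  have hqp : q.IsPath := hp.takeUntil hmem
  have hrp : r.IsPath := hp.dropUntil hmem
  -- x : neighbor of ℓ from the q side
  obtain ⟨x, hxadj, qrev, hqrev⟩ := SimpleGraph.Walk.exists_eq_cons_of_ne (Ne.symm hu) q.reverse
  have hxq : x ∈ q.support := by
    have : x ∈ q.reverse.support := by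
      rw [hqrev]; simp [SimpleGraph.Walk.support_cons]
    simpa using this
  have hxℓ : x ≠ ℓ := by
    have hnodup : q.reverse.support.Nodup := hqp.reverse.support_nodup
    rw [hqrev, SimpleGraph.Walk.support_cons] at hnodup
    intro hxeq
    exact (List.nodup_cons.mp hnodup).1 (hxeq ▸ qrev.start_mem_support)
  -- y : neighbor of ℓ from the r side
  obtain ⟨y, hyadj, r', hr'⟩ := SimpleGraph.Walk.exists_eq_cons_of_ne (Ne.symm hv) r
  have hyr : y ∈ r.support.tail := by
    rw [hr', SimpleGraph.Walk.support_cons]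
    exact r'.start_mem_support
  -- distinctness
  have hnodup : (q.support ++ r.support.tail).Nodup := by
    rw [← SimpleGraph.Walk.support_append, hspec]
    exact hp.support_nodup
  have hxy : x ≠ y := by
    intro hxeq
    exact ((List.nodup_append'.mp hnodup).2.2 hxq) (hxeq ▸ hyr)
  obtain ⟨w, -, huniq⟩ := hℓ
  exact hxy ((huniq x hxadj).trans (huniq y hyadj).symm)



lemma leaf_not_mem_cycle_support {ℓ u : V} (hℓ : IsLeaf G ℓ) {p : G.Walk u u}
    (hp : p.IsCycle) : ℓ ∉ p.support := by
  intro hmem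
  set q := p.rotate _ hmem with hqdef
  have hqc : q.IsCycle := hp.rotate hmem
  cases hq : q with
  | nil => exact hqc.ne_nil (by rw [hq])
  | cons h q' =>
    rename_i x1
    have hx1 : x1 ≠ ℓ := h.ne'
    obtain ⟨y, hy, q'', hq''⟩ :=
      SimpleGraph.Walk.exists_eq_cons_of_ne (Ne.symm hx1) q'.reverse
    obtain ⟨w, -, huniq⟩ := hℓ
    have hyx : y = x1 := (huniq y hy).trans (huniq x1 h).symm
    have htrail := hqc.isTrail
    rw [hq] at htrail
    have hnotmem : s(ℓ, x1) ∉ q'.edges := by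
      have := htrail.edges_nodup
      rw [SimpleGraph.Walk.edges_cons] at this
      exact (List.nodup_cons.mp this).1
    apply hnotmem
    have : s(ℓ, y) ∈ q'.reverse.edges := by
      rw [hq'', SimpleGraph.Walk.edges_cons]
      exact List.mem_cons_self
    rw [SimpleGraph.Walk.edges_reverse, List.mem_reverse] at this
    rwa [hyx] at this

lemma card_eq_two_connected_eq_top (h2 : Fintype.card V = 2) (hG : G.Connected) : G = ⊤ := by
  ext a b
  simp only [SimpleGraph.top_adj]
  constructor
  · exact fun h => h.ne
  · intro hab
    obtain ⟨p⟩ := hG.preconnected a b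
    cases p with
    | nil => exact absurd rfl hab
    | cons h p' =>
      rename_i w
      have hwb : w = b := by
        by_contra hwb
        have haw : a ≠ w := h.ne
        have : ({a, b, w} : Finset V).card = 3 := by
          rw [Finset.card_insert_of_notMem (by simp [hab, haw]),
            Finset.card_insert_of_notMem (by simp; exact fun h => hwb h.symm)]
          simp
        have := Finset.card_le_univ ({a, b, w} : Finset V)
        simp only [Finset.card_univ, h2] at this
        omega
      exact hwb ▸ h

lemma isAcyclic_of_card_le_two (h2 : Fintype.card V ≤ 2) : G.IsAcyclic := by
  intro v p hp
  have h3 := hp.three_le_length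
  have hnd := hp.support_nodup
  have hlen : p.support.tail.length = p.length := by
    have := p.length_support
    simp [this]
  have := hnd.length_le_card
  rw [hlen] at this
  omega


lemma card_delSet (ℓ : V) : Fintype.card (delSet ℓ) = Fintype.card V - 1 := by
  have : Fintype.card (delSet ℓ) = (Finset.univ.filter (fun x : V => x ≠ ℓ)).card := by
    rw [Fintype.card_of_subtype]
    intro x
    simp [delSet]
  rw [this, Finset.filter_ne' Finset.univ ℓ, Finset.card_erase_of_mem (Finset.mem_univ ℓ),
    Finset.card_univ]

lemma connected_induce_delSet (hG : G.Connected) {ℓ : V} (hℓ : IsLeaf G ℓ)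
    (h3 : 3 ≤ Fintype.card V) : (G.induce (delSet ℓ)).Connected := by
  rw [SimpleGraph.connected_iff]
  constructor
  · rintro ⟨u, hu⟩ ⟨v, hv⟩
    obtain ⟨p⟩ := hG.preconnected u v
    have hp : p.bypass.IsPath := SimpleGraph.Walk.bypass_isPath p
    have hℓnot : ℓ ∉ p.bypass.support := leaf_not_mem_path_support hℓ hp hu hv
    have hsupp : ∀ x ∈ p.bypass.support, x ∈ delSet ℓ := by
      intro x hx
      simp only [delSet, Set.mem_setOf_eq]
      rintro rfl
      exact hℓnot hx
    exact reachable_induce_of_walk p.bypass hsupp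
  · have : 0 < Fintype.card (delSet ℓ) := by rw [card_delSet]; omega
    exact Fintype.card_pos_iff.mp this

lemma acyclic_induce (hA : G.IsAcyclic) (s : Set V) : (G.induce s).IsAcyclic :=
  IsAcyclic.induce hA s

lemma addLeaf_isLeaf {ℓ c : V} (hc : c ≠ ℓ) (T' : SimpleGraph (delSet ℓ)) :
    IsLeaf (addLeaf ℓ c T') ℓ :=
  ⟨c, (addLeaf_adj_left hc T' c).mpr rfl, fun y hy => (addLeaf_adj_left hc T' y).mp hy⟩

lemma addLeaf_connected {ℓ c : V} (hc : c ≠ ℓ) {T' : SimpleGraph (delSet ℓ)}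
    (hT' : T'.Connected) : (addLeaf ℓ c T').Connected := by
  let f : T' →g addLeaf ℓ c T' :=
    { toFun := Subtype.val,
      map_rel' := by
        rintro ⟨a, ha⟩ ⟨b, hb⟩ hab
        exact (addLeaf_adj_ne T' ha hb).mpr hab }
  have hreach : ∀ v : V, (addLeaf ℓ c T').Reachable v ℓ := by
    intro v
    by_cases hv : v = ℓ
    · subst hv; exact SimpleGraph.Reachable.refl _
    · have h1 : T'.Reachable ⟨v, hv⟩ ⟨c, hc⟩ := hT'.preconnected _ _
      have h2 : (addLeaf ℓ c T').Reachable v c := by exact h1.map f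
      exact h2.trans ((addLeaf_adj_left hc T' c).mpr rfl).symm.reachable
  rw [SimpleGraph.connected_iff]
  exact ⟨fun u v => (hreach u).trans (hreach v).symm, ⟨ℓ⟩⟩

lemma addLeaf_acyclic {ℓ c : V} (hc : c ≠ ℓ) {T' : SimpleGraph (delSet ℓ)}
    (hT' : T'.IsAcyclic) : (addLeaf ℓ c T').IsAcyclic := by
  intro u p hp
  have hℓnot : ℓ ∉ p.support := leaf_not_mem_cycle_support (addLeaf_isLeaf hc T') hp
  have hsupp : ∀ x ∈ p.support, x ∈ delSet ℓ := by
    intro x hx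
    simp only [delSet, Set.mem_setOf_eq]
    rintro rfl
    exact hℓnot hx
  have hcyc := liftWalk_isCycle p hp hsupp
  have hA : ((addLeaf ℓ c T').induce (delSet ℓ)).IsAcyclic := by
    rw [addLeaf_induce]
    exact hT'
  exact hA _ hcyc

-- ### helpers about `Finset.min` and `leafOpt`

lemma finset_min_eq {s : Finset V} {ℓ : V} (hmem : ℓ ∈ s) (hle : ∀ v ∈ s, ℓ ≤ v) :
    s.min = some ℓ := by
  refine le_antisymm (Finset.min_le hmem) (Finset.le_min ?_)
  intro b hb
  exact WithTop.coe_le_coe.mpr (hle b hb)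

lemma leafOpt_eq_some_iff {G : SimpleGraph V} {ℓ : V} :
    leafOpt G = some ℓ ↔ IsLeaf G ℓ ∧ ∀ v, IsLeaf G v → ℓ ≤ v := by
  constructor
  · intro h
    have hmem := Finset.mem_of_min h
    simp only [Finset.mem_filter, Finset.mem_univ, true_and] at hmem
    refine ⟨hmem, fun v hv => ?_⟩
    have := Finset.min_le (s := Finset.univ.filter (fun v => IsLeaf G v))
      (a := v) (by simp [hv])
    rw [leafOpt] at h
    rw [h] at this
    exact WithTop.coe_le_coe.mp this
  · rintro ⟨h1, h2⟩
    exact finset_min_eq (by simp [h1]) (by intro v hv; exact h2 v (by simpa using hv))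

lemma nbrOf_adj {G : SimpleGraph V} {ℓ : V} (h : ∃ w, G.Adj ℓ w) : G.Adj ℓ (nbrOf G ℓ) := by
  rw [nbrOf, dif_pos h]
  exact h.choose_spec

lemma IsLeaf.adj_iff {G : SimpleGraph V} {ℓ : V} (h : IsLeaf G ℓ) (x : V) :
    G.Adj ℓ x ↔ x = nbrOf G ℓ := by
  obtain ⟨w, hw, huniq⟩ := h
  have hnbr : G.Adj ℓ (nbrOf G ℓ) := nbrOf_adj ⟨w, hw⟩
  exact ⟨fun hx => (huniq x hx).trans (huniq _ hnbr).symm, fun hx => hx ▸ hnbr⟩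

lemma eq_of_card_eq_two {a b v : V} (h2 : Fintype.card V = 2) (ha : a ≠ v) (hb : b ≠ v) :
    a = b := by
  by_contra hab
  have : ({v, a, b} : Finset V).card = 3 := by
    rw [Finset.card_insert_of_notMem (by simp [Ne.symm ha, Ne.symm hb]),
      Finset.card_insert_of_notMem (by simpa using hab)]
    simp
  have := Finset.card_le_univ ({v, a, b} : Finset V)
  simp only [Finset.card_univ, h2] at this
  omega

lemma isLeaf_of_card_eq_two {G : SimpleGraph V} (h2 : Fintype.card V = 2)
    (hG : G.Connected) (v : V) : IsLeaf G v := by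
  obtain ⟨w, hw⟩ := exists_adj_of_connected hG (by omega) v
  exact ⟨w, hw, fun y hy => eq_of_card_eq_two h2 hy.ne' hw.ne'⟩

-- ### equation lemmas

lemma pcode_succ (m : ℕ) (G : SimpleGraph V) {ℓ : V} (h : leafOpt G = some ℓ) :
    pcode (m+1) V G
      = nbrOf G ℓ :: (pcode m (delSet ℓ) (G.induce (delSet ℓ))).map Subtype.val := by
  rw [pcode, h]

lemma pdecode_succ (m : ℕ) (c : V) (l' : List V) {ℓ : V}
    (h : (Finset.univ \ (c :: l').toFinset).min = some ℓ) :
    pdecode (m+1) V (c :: l')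
      = addLeaf ℓ c (pdecode m (delSet ℓ) (l'.filterMap (toSub ℓ))) := by
  rw [pdecode, h]

-- ### the bridging lemmas

lemma not_isLeaf_nbr {G : SimpleGraph V} (hG : G.Connected) {ℓ c : V}
    (h3 : 3 ≤ Fintype.card V) (hℓ : IsLeaf G ℓ) (hc : G.Adj ℓ c) : ¬ IsLeaf G c := by
  have hcl : c ≠ ℓ := hc.ne'
  have hT'conn : (G.induce (delSet ℓ)).Connected := connected_induce_delSet hG hℓ h3
  have hcard : 2 ≤ Fintype.card (delSet ℓ) := by rw [card_delSet]; omega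
  obtain ⟨⟨w, hwl⟩, hw⟩ := exists_adj_of_connected hT'conn hcard ⟨c, hcl⟩
  have hwadj : G.Adj c w := hw
  rintro ⟨y, -, huniq⟩
  have h1 : ℓ = y := huniq ℓ hc.symm
  have h2 : w = y := huniq w hwadj
  exact hwl (h2.trans h1.symm)

lemma isLeaf_induce_iff {G : SimpleGraph V} {ℓ v : V} (hℓ : IsLeaf G ℓ)
    (hv : v ≠ ℓ) (hvc : v ≠ nbrOf G ℓ) :
    IsLeaf (G.induce (delSet ℓ)) ⟨v, hv⟩ ↔ IsLeaf G v := by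
  have hnoℓ : ¬ G.Adj v ℓ := by
    intro h
    exact hvc ((hℓ.adj_iff v).mp h.symm)
  constructor
  · rintro ⟨⟨w, hwl⟩, hw, huniq⟩
    refine ⟨w, hw, fun y hy => ?_⟩
    have hyl : y ≠ ℓ := by rintro rfl; exact hnoℓ hy
    have := huniq ⟨y, hyl⟩ hy
    exact congrArg Subtype.val this
  · rintro ⟨w, hw, huniq⟩
    have hwl : w ≠ ℓ := by rintro rfl; exact hnoℓ hw
    refine ⟨⟨w, hwl⟩, hw, ?_⟩
    rintro ⟨y, hyl⟩ hy
    exact Subtype.ext (huniq y hy)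

-- ### Key lemma: code entries are exactly the non-leaves

lemma mem_pcode_iff : ∀ (m : ℕ) (V : Type) [Fintype V] [LinearOrder V]
    (G : SimpleGraph V), Fintype.card V = m + 2 → G.Connected → G.IsAcyclic →
    ∀ v : V, v ∈ pcode m V G ↔ ¬ IsLeaf G v
  | 0, V, _, _, G, hcard, hconn, _, v => by
    simp only [pcode, List.not_mem_nil, false_iff, not_not]
    exact isLeaf_of_card_eq_two hcard hconn v
  | (m+1), V, _, _, G, hcard, hconn, hacyc, v => by
    obtain ⟨ℓ₀, hℓ₀⟩ := exists_leaf hconn hacyc (by omega)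
    have hmin : ∃ ℓ, leafOpt G = some ℓ := by
      apply Finset.min_of_nonempty
      exact ⟨ℓ₀, by simp [hℓ₀]⟩
    obtain ⟨ℓ, hℓmin⟩ := hmin
    obtain ⟨hℓ, -⟩ := leafOpt_eq_some_iff.mp hℓmin
    set c := nbrOf G ℓ with hcdef
    have hcadj : G.Adj ℓ c := (hℓ.adj_iff c).mpr rfl
    have hcl : c ≠ ℓ := hcadj.ne'
    rw [pcode_succ m G hℓmin]
    have hT'conn : (G.induce (delSet ℓ)).Connected :=
      connected_induce_delSet hconn hℓ (by omega)
    have hT'acyc : (G.induce (delSet ℓ)).IsAcyclic := acyclic_induce hacyc _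
    have hT'card : Fintype.card (delSet ℓ) = m + 2 := by rw [card_delSet]; omega
    have IH := mem_pcode_iff m (delSet ℓ) (G.induce (delSet ℓ)) hT'card hT'conn hT'acyc
    by_cases hvℓ : v = ℓ
    · subst hvℓ
      simp only [List.mem_cons]
      constructor
      · rintro (h | h)
        · exact absurd h.symm hcl
        · obtain ⟨⟨y, hyl⟩, -, hy2⟩ := List.mem_map.mp h
          exact absurd hy2 hyl
      · intro h
        exact absurd hℓ h
    · simp only [List.mem_cons]
      have hmapmem : v ∈ (pcode m (delSet ℓ) (G.induce (delSet ℓ))).map Subtype.val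
          ↔ (⟨v, hvℓ⟩ : delSet ℓ) ∈ pcode m (delSet ℓ) (G.induce (delSet ℓ)) := by
        rw [List.mem_map]
        constructor
        · rintro ⟨⟨y, hyl⟩, hy1, rfl⟩
          exact hy1
        · intro h
          exact ⟨_, h, rfl⟩
      by_cases hvc : v = c
      · subst hvc
        refine iff_of_true (Or.inl rfl) ?_
        exact not_isLeaf_nbr hconn (by omega) hℓ hcadj
      · rw [hmapmem, IH, isLeaf_induce_iff hℓ hvℓ hvc]
        constructor
        · rintro (h | h)
          · exact absurd h hvc
          · exact h
        · exact fun h => Or.inr h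

-- ### reconstruction of a tree from its minimal leaf

lemma addLeaf_eq {G : SimpleGraph V} {ℓ : V} (hℓ : IsLeaf G ℓ) :
    addLeaf ℓ (nbrOf G ℓ) (G.induce (delSet ℓ)) = G := by
  have hcadj : G.Adj ℓ (nbrOf G ℓ) := (hℓ.adj_iff _).mpr rfl
  have hcl : nbrOf G ℓ ≠ ℓ := hcadj.ne'
  ext a b
  by_cases ha : a = ℓ
  · subst ha
    rw [addLeaf_adj_left hcl, hℓ.adj_iff b]
  · by_cases hb : b = ℓ
    · subst hb
      rw [SimpleGraph.adj_comm, SimpleGraph.adj_comm _ a, addLeaf_adj_left hcl, hℓ.adj_iff a]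
    · exact addLeaf_adj_ne _ ha hb

-- ### (A) the code has the right length

lemma pcode_length : ∀ (m : ℕ) (V : Type) [Fintype V] [LinearOrder V]
    (G : SimpleGraph V), Fintype.card V = m + 2 → G.Connected → G.IsAcyclic →
    (pcode m V G).length = m
  | 0, V, _, _, G, _, _, _ => rfl
  | (m+1), V, _, _, G, hcard, hconn, hacyc => by
    obtain ⟨ℓ₀, hℓ₀⟩ := exists_leaf hconn hacyc (by omega)
    obtain ⟨ℓ, hℓmin⟩ := Finset.min_of_nonempty (s := Finset.univ.filter (fun v => IsLeaf G v))
      ⟨ℓ₀, by simp [hℓ₀]⟩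
    have hℓmin : leafOpt G = some ℓ := hℓmin
    obtain ⟨hℓ, -⟩ := leafOpt_eq_some_iff.mp hℓmin
    rw [pcode_succ m G hℓmin]
    simp only [List.length_cons, List.length_map]
    rw [pcode_length m (delSet ℓ) (G.induce (delSet ℓ))
      (by rw [card_delSet]; omega)
      (connected_induce_delSet hconn hℓ (by omega))
      (acyclic_induce hacyc _)]

-- ### (B) decoding produces trees

lemma pdecode_isTree : ∀ (m : ℕ) (V : Type) [Fintype V] [LinearOrder V]
    (l : List V), Fintype.card V = m + 2 → l.length = m →
    (pdecode m V l).Connected ∧ (pdecode m V l).IsAcyclic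
  | 0, V, _, _, l, hcard, _ => by
    constructor
    · rw [pdecode]
      have : Nonempty V := Fintype.card_pos_iff.mp (by omega)
      exact SimpleGraph.connected_top
    · exact isAcyclic_of_card_le_two (by omega)
  | (m+1), V, _, _, l, hcard, hlen => by
    match l with
    | c :: l' =>
      have hS : ((Finset.univ : Finset V) \ (c :: l').toFinset).Nonempty := by
        rw [← Finset.card_pos, Finset.card_sdiff_of_subset (Finset.subset_univ _), Finset.card_univ, hcard]
        have h1 : (c :: l').toFinset.card ≤ (c :: l').length := (c :: l').toFinset_card_le
        simp only [List.length_cons, hlen] at h1 ⊢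
        omega
      obtain ⟨ℓ, hℓ⟩ := Finset.min_of_nonempty hS
      have hℓS := Finset.mem_of_min hℓ
      rw [Finset.mem_sdiff, List.mem_toFinset] at hℓS
      have hℓc : ℓ ≠ c := fun h => hℓS.2 (h ▸ List.mem_cons_self)
      have hℓl' : ∀ x ∈ l', x ≠ ℓ := fun x hx hxl => hℓS.2 (hxl ▸ List.mem_cons_of_mem _ hx)
      rw [pdecode_succ m c l' hℓ]
      have hlen' : (l'.filterMap (toSub ℓ)).length = m := by
        rw [length_toSub ℓ l' hℓl']
        simpa using hlen
      have hcard' : Fintype.card (delSet ℓ) = m + 2 := by rw [card_delSet]; omega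
      obtain ⟨hconn', hacyc'⟩ := pdecode_isTree m (delSet ℓ) (l'.filterMap (toSub ℓ)) hcard' hlen'
      exact ⟨addLeaf_connected (Ne.symm hℓc) hconn', addLeaf_acyclic (Ne.symm hℓc) hacyc'⟩

-- ### (C) decode ∘ encode = id

lemma pdecode_pcode : ∀ (m : ℕ) (V : Type) [Fintype V] [LinearOrder V]
    (G : SimpleGraph V), Fintype.card V = m + 2 → G.Connected → G.IsAcyclic →
    pdecode m V (pcode m V G) = G
  | 0, V, _, _, G, hcard, hconn, _ => by
    rw [pcode, pdecode]
    exact (card_eq_two_connected_eq_top hcard hconn).symm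
  | (m+1), V, _, _, G, hcard, hconn, hacyc => by
    obtain ⟨ℓ₀, hℓ₀⟩ := exists_leaf hconn hacyc (by omega)
    obtain ⟨ℓ, hℓmin⟩ := Finset.min_of_nonempty (s := Finset.univ.filter (fun v => IsLeaf G v))
      ⟨ℓ₀, by simp [hℓ₀]⟩
    have hℓmin : leafOpt G = some ℓ := hℓmin
    obtain ⟨hℓ, -⟩ := leafOpt_eq_some_iff.mp hℓmin
    -- the complement of the code is the set of leaves
    have hcompl : (Finset.univ : Finset V) \ (pcode (m+1) V G).toFinset
        = Finset.univ.filter (fun v => IsLeaf G v) := by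
      ext v
      rw [Finset.mem_sdiff, List.mem_toFinset, Finset.mem_filter]
      have := mem_pcode_iff (m+1) V G hcard hconn hacyc v
      constructor
      · intro ⟨_, h⟩
        exact ⟨Finset.mem_univ v, not_not.mp (fun hn => h (this.mpr hn))⟩
      · intro ⟨_, h⟩
        exact ⟨Finset.mem_univ v, fun hn => (this.mp hn) h⟩
    rw [pcode_succ m G hℓmin]
    have hminS : ((Finset.univ : Finset V)
        \ (nbrOf G ℓ :: (pcode m (delSet ℓ) (G.induce (delSet ℓ))).map Subtype.val).toFinset).min
        = some ℓ := by
      rw [← pcode_succ m G hℓmin, hcompl]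
      exact hℓmin
    rw [pdecode_succ m _ _ hminS, toSub_map_val]
    rw [pdecode_pcode m (delSet ℓ) (G.induce (delSet ℓ))
      (by rw [card_delSet]; omega)
      (connected_induce_delSet hconn hℓ (by omega))
      (acyclic_induce hacyc _)]
    exact addLeaf_eq hℓ

-- ### (D) encode ∘ decode = id

lemma pcode_pdecode : ∀ (m : ℕ) (V : Type) [Fintype V] [LinearOrder V]
    (l : List V), Fintype.card V = m + 2 → l.length = m →
    pcode m V (pdecode m V l) = l
  | 0, V, _, _, l, hcard, hlen => by
    rw [pcode, List.length_eq_zero_iff.mp hlen]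
  | (m+1), V, _, _, l, hcard, hlen => by
    match l with
    | c :: l' =>
      have hS : ((Finset.univ : Finset V) \ (c :: l').toFinset).Nonempty := by
        rw [← Finset.card_pos, Finset.card_sdiff_of_subset (Finset.subset_univ _), Finset.card_univ, hcard]
        have h1 : (c :: l').toFinset.card ≤ (c :: l').length := (c :: l').toFinset_card_le
        simp only [List.length_cons, hlen] at h1 ⊢
        omega
      obtain ⟨ℓ, hℓ⟩ := Finset.min_of_nonempty hS
      have hℓS := Finset.mem_of_min hℓ
      rw [Finset.mem_sdiff, List.mem_toFinset] at hℓS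
      have hℓc : ℓ ≠ c := fun h => hℓS.2 (h ▸ List.mem_cons_self)
      have hℓl' : ∀ x ∈ l', x ≠ ℓ := fun x hx hxl => hℓS.2 (hxl ▸ List.mem_cons_of_mem _ hx)
      have hcl : c ≠ ℓ := Ne.symm hℓc
      rw [pdecode_succ m c l' hℓ]
      set l'' := l'.filterMap (toSub ℓ) with hl''def
      have hlen' : l''.length = m := by
        rw [hl''def, length_toSub ℓ l' hℓl']
        simpa using hlen
      have hcard' : Fintype.card (delSet ℓ) = m + 2 := by rw [card_delSet]; omega
      set T'' := pdecode m (delSet ℓ) l'' with hT''def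
      obtain ⟨hconn'', hacyc''⟩ := pdecode_isTree m (delSet ℓ) l'' hcard' hlen'
      set T := addLeaf ℓ c T'' with hTdef
      have hTconn : T.Connected := addLeaf_connected hcl hconn''
      have hTacyc : T.IsAcyclic := addLeaf_acyclic hcl hacyc''
      have hTleaf : IsLeaf T ℓ := addLeaf_isLeaf hcl T''
      have hTadj : T.Adj ℓ c := (addLeaf_adj_left hcl T'' c).mpr rfl
      have hnbr : nbrOf T ℓ = c := ((hTleaf.adj_iff c).mp hTadj).symm
      have hTinduce : T.induce (delSet ℓ) = T'' := addLeaf_induce T''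
      have hIH : pcode m (delSet ℓ) T'' = l'' :=
        pcode_pdecode m (delSet ℓ) l'' hcard' hlen'
      -- every element of the list c :: l' is a non-leaf of T
      have hnotleaf : ∀ v ∈ c :: l', ¬ IsLeaf T v := by
        intro v hv
        rcases List.mem_cons.mp hv with rfl | hv'
        · exact not_isLeaf_nbr hTconn (by omega) hTleaf hTadj
        · have hvℓ : v ≠ ℓ := hℓl' v hv'
          by_cases hvc : v = c
          · subst hvc
            exact not_isLeaf_nbr hTconn (by omega) hTleaf hTadj
          · have hvl'' : (⟨v, hvℓ⟩ : delSet ℓ) ∈ l'' :=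
              (mem_toSub ℓ l' hℓl' _).mpr hv'
            rw [← hIH] at hvl''
            have := (mem_pcode_iff m (delSet ℓ) T'' hcard' hconn'' hacyc'' _).mp hvl''
            rw [← hTinduce] at this
            rw [← isLeaf_induce_iff hTleaf hvℓ (hnbr ▸ hvc)]
            exact this
      -- hence ℓ is the minimal leaf of T
      have hleafmin : leafOpt T = some ℓ := by
        rw [leafOpt_eq_some_iff]
        refine ⟨hTleaf, fun v hv => ?_⟩
        have hvS : v ∈ (Finset.univ : Finset V) \ (c :: l').toFinset := by
          rw [Finset.mem_sdiff, List.mem_toFinset]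
          exact ⟨Finset.mem_univ v, fun hmem => hnotleaf v hmem hv⟩
        have := Finset.min_le hvS
        rw [hℓ] at this
        exact WithTop.coe_le_coe.mp this
      rw [pcode_succ m T hleafmin, hnbr]
      congr 1
      have : pcode m (delSet ℓ) (T.induce (delSet ℓ)) = l'' := by
        rw [hTinduce]
        exact hIH
      rw [this, hl''def, map_val_toSub ℓ l' hℓl']

-- ### the final count

theorem card_trees (m : ℕ) (V : Type) [Fintype V] [LinearOrder V]
    (hcard : Fintype.card V = m + 2) :
    Nat.card {G : SimpleGraph V // G.Connected ∧ G.IsAcyclic} = (m + 2) ^ m := by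
  have e : {G : SimpleGraph V // G.Connected ∧ G.IsAcyclic}
      ≃ {l : List V // l.length = m} :=
    { toFun := fun G => ⟨pcode m V G.1, pcode_length m V G.1 hcard G.2.1 G.2.2⟩
      invFun := fun l => ⟨pdecode m V l.1, pdecode_isTree m V l.1 hcard l.2⟩
      left_inv := fun G => Subtype.ext (pdecode_pcode m V G.1 hcard G.2.1 G.2.2)
      right_inv := fun l => Subtype.ext (pcode_pdecode m V l.1 hcard l.2) }
  rw [Nat.card_congr e]
  have e2 : {l : List V // l.length = m} ≃ (Fin m → V) := Equiv.vectorEquivFin V m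
  rw [Nat.card_congr e2, Nat.card_fun, Nat.card_eq_fintype_card, Nat.card_eq_fintype_card,
    Fintype.card_fin, hcard]

end Cayley


/-- Cayley's formula: the number of simple graphs on the vertex set
`{1, …, n}` that are trees (connected and acyclic) equals `n^(n-2)`. -/
theorem stmt19 (n : ℕ) (hn : 2 ≤ n) :
    Nat.card {G : SimpleGraph (Fin n) // G.Connected ∧ G.IsAcyclic} = n ^ (n - 2) := by
  have h : Fintype.card (Fin n) = (n - 2) + 2 := by
    rw [Fintype.card_fin]; omega
  rw [Cayley.card_trees (n - 2) (Fin n) h]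
  congr 1
  omega
end
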